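/- arXiv:2408.15306 — 5 statements merged into one kernel-verified Lean document; each statement's English description precedes it below -/
import Mathlib

section
/- For self-adjoint operators ω and Δ on a d-dimensional Hilbert space with ω + Δ ≥ 0, the von Neumann entropy satisfies S(ω + Δ) ≤ H(λ^↓(Δ) + λ^↑(ω)), where H is the Shannon entropy of the (non-negative) vector of entries. -/
open Matrix BigOperators
open scoped ComplexOrder

noncomputable section

/-- `η(x) = -x log x` (with `log 0 = 0` convention). -/
def eta (x : ℝ) : ℝ := -(x * Real.log x)

/-- Shannon entropy of a (non-negative) vector. -/
def shannonH {n : ℕ} (p : Fin n → ℝ) : ℝ := ∑ i, eta (p i)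

/-- Binary entropy `h(ε) = -ε log ε - (1-ε) log(1-ε)`. -/
def binEnt (x : ℝ) : ℝ := -(x * Real.log x) - ((1 - x) * Real.log (1 - x))

/-- Eigenvalues of a Hermitian matrix in non-decreasing order. -/
def eigUp {d : ℕ} (A : Matrix (Fin d) (Fin d) ℂ) (hA : A.IsHermitian) : Fin d → ℝ :=
  hA.eigenvalues ∘ Tuple.sort hA.eigenvalues

/-- Eigenvalues of a Hermitian matrix in non-increasing order. -/
def eigDown {d : ℕ} (A : Matrix (Fin d) (Fin d) ℂ) (hA : A.IsHermitian) : Fin d → ℝ :=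
  fun i => eigUp A hA i.rev

/-- Entries of a vector rearranged in non-increasing order. -/
def sortDown {n : ℕ} (x : Fin n → ℝ) : Fin n → ℝ :=
  fun i => (x ∘ Tuple.sort x) i.rev

/-- `Majorizes y x` : the vector `x` is majorized by the vector `y`. -/
def Majorizes {n : ℕ} (y x : Fin n → ℝ) : Prop :=
  (∀ k : ℕ, ∑ j ∈ Finset.univ.filter (fun j : Fin n => (j : ℕ) < k), sortDown x j ≤
            ∑ j ∈ Finset.univ.filter (fun j : Fin n => (j : ℕ) < k), sortDown y j) ∧
  ∑ j, x j = ∑ j, y j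

/-- Von Neumann entropy `S(A) = -Tr(A log A)` expressed via eigenvalues. -/
def vnEntropy {n : Type*} [Fintype n] [DecidableEq n] (A : Matrix n n ℂ) : ℝ :=
  if hA : A.IsHermitian then ∑ i, eta (hA.eigenvalues i) else 0

/-- Trace norm of a Hermitian matrix: sum of absolute values of eigenvalues. -/
def traceNorm {n : Type*} [Fintype n] [DecidableEq n] (A : Matrix n n ℂ) : ℝ :=
  if hA : A.IsHermitian then ∑ i, |hA.eigenvalues i| else 0

/-- A density matrix: positive semi-definite with unit trace. -/
def IsDensity {n : Type*} [Fintype n] [DecidableEq n] (ρ : Matrix n n ℂ) : Prop :=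
  ρ.PosSemidef ∧ ρ.trace = 1

/-- Matrix logarithm via the spectral decomposition (with `log 0 = 0` convention). -/
def mlog {n : Type*} [Fintype n] [DecidableEq n] (A : Matrix n n ℂ) : Matrix n n ℂ :=
  if hA : A.IsHermitian then
    (hA.eigenvectorUnitary : Matrix n n ℂ)
      * Matrix.diagonal (fun i => (Real.log (hA.eigenvalues i) : ℂ))
      * (star (hA.eigenvectorUnitary : Matrix n n ℂ))
  else 0

/-- Umegaki relative entropy `D(ρ‖σ) = Tr(ρ (log ρ - log σ))`. -/
def relEnt {n : Type*} [Fintype n] [DecidableEq n] (ρ σ : Matrix n n ℂ) : ℝ :=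
  ((ρ * (mlog ρ - mlog σ)).trace).re

/-- Max-relative entropy `D_max(ρ‖σ) = inf {λ > 0 : ρ ≤ e^λ σ}`. -/
def dMax {n : Type*} [Fintype n] [DecidableEq n] (ρ σ : Matrix n n ℂ) : ℝ :=
  sInf {l : ℝ | 0 < l ∧ (Real.exp l • σ - ρ).PosSemidef}

/-- Partial trace over the first tensor factor. -/
def ptraceA {dA dB : ℕ} (ρ : Matrix (Fin dA × Fin dB) (Fin dA × Fin dB) ℂ) :
    Matrix (Fin dB) (Fin dB) ℂ :=
  Matrix.of fun i j => ∑ a, ρ (a, i) (a, j)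

/-- Conditional entropy `S(A|B)_ρ = S(ρ_{AB}) - S(ρ_B)`. -/
def condEnt {dA dB : ℕ} (ρ : Matrix (Fin dA × Fin dB) (Fin dA × Fin dB) ℂ) : ℝ :=
  vnEntropy ρ - vnEntropy (ptraceA ρ)

section VNAuxSection

namespace VNAux

variable {d : ℕ}

lemma eta_zero : eta 0 = 0 := by simp [eta]

lemma eta_concave_bound {x y : ℝ} (hx : 0 < x) (hy : 0 ≤ y) :
    eta y ≤ eta x + (-Real.log x - 1) * (y - x) := by
  rcases eq_or_lt_of_le hy with h | hy'
  · simp only [← h, eta_zero, eta]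
    nlinarith [Real.log_le_sub_one_of_pos hx]
  · have h1 : Real.log (x / y) ≤ x / y - 1 := Real.log_le_sub_one_of_pos (by positivity)
    have h2 : Real.log (x / y) = Real.log x - Real.log y :=
      Real.log_div (ne_of_gt hx) (ne_of_gt hy')
    have h3 : y * Real.log (x / y) ≤ x - y := by
      have := mul_le_mul_of_nonneg_left h1 (le_of_lt hy')
      calc y * Real.log (x/y) ≤ y * (x/y - 1) := this
        _ = x - y := by field_simp
    simp only [eta]
    nlinarith [h3, h2]

/-- Hardy–Littlewood–Pólya / Schur-concavity style inequality for `eta`. -/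
lemma hlp : ∀ (n : ℕ) (x y : ℕ → ℝ),
    (∀ i j, i ≤ j → j < n → x j ≤ x i) →
    (∀ j, j < n → 0 ≤ y j) →
    (∀ k, k ≤ n → ∑ j ∈ Finset.range k, x j ≤ ∑ j ∈ Finset.range k, y j) →
    (∑ j ∈ Finset.range n, x j = ∑ j ∈ Finset.range n, y j) →
    ∑ j ∈ Finset.range n, eta (y j) ≤ ∑ j ∈ Finset.range n, eta (x j) := by
  intro n
  induction n with
  | zero => intro x y _ _ _ _; simp
  | succ n ih =>
    intro x y hmono hy0 hmaj hsum
    have hxy : y n ≤ x n := by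
      have h1 := hmaj n (Nat.le_succ n)
      have h2 := hsum
      rw [Finset.sum_range_succ, Finset.sum_range_succ] at h2
      linarith
    rcases le_or_gt (x n) 0 with hxn | hxn
    · -- last entries are both zero
      have hyn : y n = 0 := le_antisymm (hxy.trans hxn) (hy0 n (Nat.lt_succ_self n))
      have hxn0 : x n = 0 := le_antisymm hxn (hyn ▸ hxy)
      rw [Finset.sum_range_succ, Finset.sum_range_succ, hyn, hxn0, eta_zero]
      have hsum' : ∑ j ∈ Finset.range n, x j = ∑ j ∈ Finset.range n, y j := by
        rw [Finset.sum_range_succ, Finset.sum_range_succ, hyn, hxn0] at hsum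
        linarith
      have := ih x y (fun i j hij hj => hmono i j hij (hj.trans (Nat.lt_succ_self n)))
        (fun j hj => hy0 j (hj.trans (Nat.lt_succ_self n)))
        (fun k hk => hmaj k (hk.trans (Nat.le_succ n))) hsum'
      linarith
    · -- all x positive, Abel summation
      have hxpos : ∀ j, j < n + 1 → 0 < x j := fun j hj =>
        lt_of_lt_of_le hxn (hmono j n (Nat.lt_succ_iff.mp hj) (Nat.lt_succ_self n))
      set g : ℕ → ℝ := fun j => -Real.log (x j) - 1 with hg
      have step1 : ∑ j ∈ Finset.range (n+1), eta (y j) ≤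
          ∑ j ∈ Finset.range (n+1), eta (x j) + ∑ j ∈ Finset.range (n+1), g j • (y j - x j) := by
        rw [← Finset.sum_add_distrib]
        apply Finset.sum_le_sum
        intro j hj
        have := eta_concave_bound (hxpos j (Finset.mem_range.mp hj))
          (hy0 j (Finset.mem_range.mp hj))
        simpa [smul_eq_mul, hg] using this
      have habel := Finset.sum_range_by_parts g (fun j => y j - x j) (n+1)
      have hD0 : ∑ i ∈ Finset.range (n+1), (y i - x i) = 0 := by
        rw [Finset.sum_sub_distrib]; linarith
      have hterm : ∀ i ∈ Finset.range n, 0 ≤ (g (i+1) - g i) • ∑ j ∈ Finset.range (i+1), (y j - x j) := by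
        intro i hi
        have hi' := Finset.mem_range.mp hi
        have h1 : 0 ≤ g (i+1) - g i := by
          have := Real.log_le_log (hxpos (i+1) (by omega))
            (hmono i (i+1) (Nat.le_succ i) (by omega))
          simp only [hg]; linarith
        have h2 : 0 ≤ ∑ j ∈ Finset.range (i+1), (y j - x j) := by
          rw [Finset.sum_sub_distrib]
          have := hmaj (i+1) (by omega)
          linarith
        exact smul_nonneg h1 h2
      have step2 : ∑ j ∈ Finset.range (n+1), g j • (y j - x j) ≤ 0 := by
        rw [habel]
        simp only [Nat.add_sub_cancel, hD0, smul_zero, zero_sub, neg_nonpos]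
        exact Finset.sum_nonneg hterm
      have : ∑ j ∈ Finset.range (n+1), g j • (y j - x j) ≤ 0 := step2
      linarith

def qf (A : Matrix (Fin d) (Fin d) ℂ) (x : Fin d → ℂ) : ℝ := (star x ⬝ᵥ (A *ᵥ x)).re

def nsq (x : Fin d → ℂ) : ℝ := (star x ⬝ᵥ x).re

structure ES (A : Matrix (Fin d) (Fin d) ℂ) (u : Fin d → Fin d → ℂ) (a : Fin d → ℝ) : Prop where
  ortho : ∀ i j, star (u i) ⬝ᵥ u j = if i = j then 1 else 0
  complete : ∀ x : Fin d → ℂ, x = ∑ i, (star (u i) ⬝ᵥ x) • u i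
  eigen : ∀ i, A *ᵥ u i = (a i : ℂ) • u i

def coef (u : Fin d → Fin d → ℂ) (x : Fin d → ℂ) (i : Fin d) : ℂ := star (u i) ⬝ᵥ x

lemma dotProduct_sum' {ι : Type*} (v : Fin d → ℂ) (s : Finset ι) (w : ι → Fin d → ℂ) :
    v ⬝ᵥ (∑ i ∈ s, w i) = ∑ i ∈ s, v ⬝ᵥ w i := by
  simp only [dotProduct, Finset.sum_apply, Finset.mul_sum]
  exact Finset.sum_comm

lemma conj_coef (u : Fin d → Fin d → ℂ) (x : Fin d → ℂ) (i : Fin d) :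
    star x ⬝ᵥ u i = starRingEnd ℂ (coef u x i) := by
  rw [coef, Matrix.star_dotProduct]; rfl

lemma ES.qf_eq {A u a} (h : ES A u a) (x : Fin d → ℂ) :
    qf A x = ∑ i, a i * Complex.normSq (coef u x i) := by
  have expand : A *ᵥ x = ∑ i, (coef u x i * a i) • u i := by
    conv_lhs => rw [h.complete x]
    rw [← Matrix.mulVecLin_apply, map_sum]
    refine Finset.sum_congr rfl fun i _ => ?_
    rw [_root_.map_smul, Matrix.mulVecLin_apply, h.eigen i, smul_smul]
    rfl
  have key : star x ⬝ᵥ (A *ᵥ x) = ∑ i, ((coef u x i * a i) * starRingEnd ℂ (coef u x i)) := by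
    rw [expand, dotProduct_sum']
    refine Finset.sum_congr rfl fun i _ => ?_
    rw [dotProduct_smul, smul_eq_mul, conj_coef]
  rw [qf, key, Complex.re_sum]
  refine Finset.sum_congr rfl fun i _ => ?_
  have : coef u x i * (a i : ℂ) * starRingEnd ℂ (coef u x i)
      = ((a i * Complex.normSq (coef u x i) : ℝ) : ℂ) := by
    push_cast
    rw [show coef u x i * (a i:ℂ) * starRingEnd ℂ (coef u x i)
      = (a i:ℂ) * (coef u x i * starRingEnd ℂ (coef u x i)) from by ring, Complex.mul_conj]
  rw [this, Complex.ofReal_re]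

/-- ES for the identity matrix, reusing any complete orthonormal family. -/
lemma ES.id {A u a} (h : ES (d := d) A u a) : ES (1 : Matrix (Fin d) (Fin d) ℂ) u (fun _ => 1) :=
  ⟨h.ortho, h.complete, fun i => by simp⟩

lemma ES.nsq_eq {A u a} (h : ES A u a) (x : Fin d → ℂ) :
    nsq x = ∑ i, Complex.normSq (coef u x i) := by
  have := h.id.qf_eq x
  simpa [qf, nsq] using this

lemma nsq_eq_sum (x : Fin d → ℂ) : nsq x = ∑ j, Complex.normSq (x j) := by
  simp only [nsq, dotProduct, Complex.re_sum, Pi.star_apply]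
  refine Finset.sum_congr rfl fun j _ => ?_
  rw [show star (x j) * x j = ((Complex.normSq (x j) : ℝ) : ℂ) from by
    rw [mul_comm]; exact Complex.mul_conj _]
  exact Complex.ofReal_re _

lemma nsq_pos {x : Fin d → ℂ} (hx : x ≠ 0) : 0 < nsq x := by
  rw [nsq_eq_sum]
  obtain ⟨j, hj⟩ : ∃ j, x j ≠ 0 := Function.ne_iff.mp hx
  exact Finset.sum_pos' (fun i _ => Complex.normSq_nonneg _)
    ⟨j, Finset.mem_univ j, Complex.normSq_pos.mpr hj⟩

lemma es_canon {A : Matrix (Fin d) (Fin d) ℂ} (hA : A.IsHermitian) :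
    ES A (fun i => ⇑(hA.eigenvectorBasis i)) hA.eigenvalues := by
  constructor
  · intro i j
    have h := orthonormal_iff_ite.mp hA.eigenvectorBasis.orthonormal i j
    rw [EuclideanSpace.inner_eq_star_dotProduct, dotProduct_comm] at h
    exact h
  · intro x
    have h := congrArg WithLp.ofLp (hA.eigenvectorBasis.sum_repr' (WithLp.toLp 2 x))
    simp only [WithLp.ofLp_sum, WithLp.ofLp_smul, EuclideanSpace.inner_eq_star_dotProduct,
      WithLp.ofLp_toLp] at h
    refine h.symm.trans (Finset.sum_congr rfl fun i _ => ?_)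
    rw [dotProduct_comm]
  · intro i
    have h := hA.mulVec_eigenvectorBasis i
    rw [h]
    funext j
    simp [Complex.real_smul]
lemma ES.neg {A u a} (h : ES (d := d) A u a) : ES (-A) u (fun i => -(a i)) :=
  ⟨h.ortho, h.complete, fun i => by rw [Matrix.neg_mulVec, h.eigen i]; push_cast; simp [neg_smul]⟩

lemma sortDown_antitone (x : Fin d → ℝ) : Antitone (sortDown x) := fun s t hst =>
  Tuple.monotone_sort x (Fin.rev_le_rev.mpr hst)

/-- the permutation sending `s` to the position of the `s`-th largest entry -/
def dPerm (x : Fin d → ℝ) : Equiv.Perm (Fin d) := Fin.revPerm.trans (Tuple.sort x)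

lemma dPerm_apply (x : Fin d → ℝ) (s : Fin d) : dPerm x s = Tuple.sort x s.rev := rfl

lemma sortDown_eq (x : Fin d → ℝ) (s : Fin d) : sortDown x s = x (dPerm x s) := rfl

/-- The core variational comparison lemma. -/
lemma core {A B : Matrix (Fin d) (Fin d) ℂ} {u v : Fin d → Fin d → ℂ} {a b : Fin d → ℝ} {c : ℝ}
    (hA : ES A u a) (hB : ES B v b)
    (h : ∀ x : Fin d → ℂ, qf A x + c * nsq x ≤ qf B x) (i : Fin d) :
    sortDown a i + c ≤ sortDown b i := by
  classical
  set ea : Fin d → Fin d := fun s => dPerm a s with hea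
  set eb : Fin d → Fin d := fun s => dPerm b s with heb
  have hea_inj : Function.Injective ea := (Equiv.injective _)
  have heb_inj : Function.Injective eb := (Equiv.injective _)
  -- the linear map whose kernel provides the test vector
  let xOf : (↥(Set.Iic i) → ℂ) →ₗ[ℂ] (Fin d → ℂ) :=
    { toFun := fun f => ∑ t, f t • u (ea t.1)
      map_add' := by intro f g; simp [add_smul, Finset.sum_add_distrib]
      map_smul' := by intro m f; simp [smul_smul, Finset.smul_sum] }
  let coefLMv : Fin d → ((Fin d → ℂ) →ₗ[ℂ] ℂ) := fun j =>
    { toFun := fun y => star (v j) ⬝ᵥ y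
      map_add' := fun y z => dotProduct_add _ _ _
      map_smul' := fun m y => by simp [dotProduct_smul] }
  let L : (↥(Set.Iic i) → ℂ) →ₗ[ℂ] (↥(Set.Iio i) → ℂ) :=
    LinearMap.pi (fun s => (coefLMv (eb s.1)).comp xOf)
  have hcard1 : Module.finrank ℂ (↥(Set.Iic i) → ℂ) = (i : ℕ) + 1 := by
    rw [Module.finrank_pi, ← Set.toFinset_card, Set.toFinset_Iic, Fin.card_Iic]
  have hcard2 : Module.finrank ℂ (↥(Set.Iio i) → ℂ) = (i : ℕ) := by
    rw [Module.finrank_pi, ← Set.toFinset_card, Set.toFinset_Iio, Fin.card_Iio]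
  have hker : ∃ f, f ∈ LinearMap.ker L ∧ f ≠ 0 := by
    apply Submodule.exists_mem_ne_zero_of_ne_bot
    apply LinearMap.ker_ne_bot_of_finrank_lt
    rw [hcard1, hcard2]; omega
  obtain ⟨f, hfker, hf0⟩ := hker
  set x : Fin d → ℂ := xOf f with hx
  -- coefficient computation in the `u` system
  have hcoef : ∀ s : Fin d, coef u x (ea s) = if h : s ≤ i then f ⟨s, h⟩ else 0 := by
    intro s
    have : coef u x (ea s) = ∑ t : ↥(Set.Iic i), f t * (if ea s = ea t.1 then 1 else 0) := by
      rw [coef, hx]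
      show star (u (ea s)) ⬝ᵥ (∑ t : ↥(Set.Iic i), f t • u (ea t.1)) = _
      rw [dotProduct_sum']
      refine Finset.sum_congr rfl fun t _ => ?_
      rw [dotProduct_smul, smul_eq_mul, hA.ortho]
    rw [this]
    by_cases hs : s ≤ i
    · rw [dif_pos hs]
      rw [Finset.sum_eq_single (⟨s, hs⟩ : ↥(Set.Iic i))]
      · simp
      · intro t _ hts
        have : ea s ≠ ea t.1 := fun hc => hts (by
          apply Subtype.ext
          exact (hea_inj hc).symm)
        rw [if_neg this, mul_zero]
      · intro hmem; exact absurd (Finset.mem_univ _) hmem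
    · rw [dif_neg hs]
      apply Finset.sum_eq_zero
      intro t _
      have : ea s ≠ ea t.1 := fun hc => hs (by rw [hea_inj hc]; exact t.2)
      rw [if_neg this, mul_zero]
  have hxne : x ≠ 0 := by
    obtain ⟨t0, ht0⟩ : ∃ t0, f t0 ≠ 0 := Function.ne_iff.mp hf0
    intro hxz
    apply ht0
    have h1 := hcoef t0.1
    rw [dif_pos (show (t0 : Fin d) ≤ i from t0.2)] at h1
    rw [hxz] at h1
    simp only [coef, dotProduct_zero] at h1
    rw [← h1]
  -- coefficient vanishing in the `v` system
  have hvan : ∀ s : Fin d, s < i → coef v x (eb s) = 0 := by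
    intro s hs
    have := congrFun (LinearMap.mem_ker.mp hfker) ⟨s, hs⟩
    exact this
  -- A-side lower bound
  have hA1 : (sortDown a i + c) * nsq x ≤ qf A x + c * nsq x := by
    have : sortDown a i * nsq x ≤ qf A x := by
      rw [hA.qf_eq x, hA.nsq_eq x, ← Equiv.sum_comp (dPerm a)
        (fun j => a j * Complex.normSq (coef u x j)),
        ← Equiv.sum_comp (dPerm a) (fun j => Complex.normSq (coef u x j)), Finset.mul_sum]
      apply Finset.sum_le_sum
      intro s _
      by_cases hs : s ≤ i
      · have h1 : sortDown a i ≤ a (dPerm a s) := sortDown_antitone a hs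
        exact mul_le_mul_of_nonneg_right h1 (Complex.normSq_nonneg _)
      · have : coef u x (ea s) = 0 := by rw [hcoef s, dif_neg hs]
        rw [show (dPerm a) s = ea s from rfl, this]
        simp
    nlinarith [this]
  -- B-side upper bound
  have hB1 : qf B x ≤ sortDown b i * nsq x := by
    rw [hB.qf_eq x, hB.nsq_eq x, ← Equiv.sum_comp (dPerm b)
      (fun j => b j * Complex.normSq (coef v x j)),
      ← Equiv.sum_comp (dPerm b) (fun j => Complex.normSq (coef v x j)), Finset.mul_sum]
    apply Finset.sum_le_sum
    intro s _
    by_cases hs : s < i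
    · rw [show (dPerm b) s = eb s from rfl, hvan s hs]
      simp
    · have h1 : b (dPerm b s) ≤ sortDown b i := sortDown_antitone b (not_lt.mp hs)
      exact mul_le_mul_of_nonneg_right h1 (Complex.normSq_nonneg _)
  have hN := nsq_pos hxne
  have := (h x).trans hB1
  have := hA1.trans this
  exact le_of_mul_le_mul_right (by linarith [this]) hN
lemma qf_add (A B : Matrix (Fin d) (Fin d) ℂ) (x : Fin d → ℂ) :
    qf (A + B) x = qf A x + qf B x := by
  simp [qf, Matrix.add_mulVec, dotProduct_add]

lemma qf_sub (A B : Matrix (Fin d) (Fin d) ℂ) (x : Fin d → ℂ) :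
    qf (A - B) x = qf A x - qf B x := by
  simp [qf, Matrix.sub_mulVec, dotProduct_sub]

lemma qf_smul_one (c : ℝ) (x : Fin d → ℂ) : qf ((c : ℂ) • (1 : Matrix (Fin d) (Fin d) ℂ)) x
    = c * nsq x := by
  rw [qf, Matrix.smul_mulVec, Matrix.one_mulVec, dotProduct_smul, smul_eq_mul,
    Complex.re_ofReal_mul, nsq]

lemma qf_psd {N : Matrix (Fin d) (Fin d) ℂ} (hN : N.PosSemidef) (x : Fin d → ℂ) :
    0 ≤ qf N x := by
  have := hN.re_dotProduct_nonneg x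
  simpa [qf, RCLike.re_to_complex] using this

lemma eig_le {X Y : Matrix (Fin d) (Fin d) ℂ} (hX : X.IsHermitian) (hY : Y.IsHermitian)
    {c : ℝ} (h : ∀ x, qf X x + c * nsq x ≤ qf Y x) (i : Fin d) :
    sortDown hX.eigenvalues i + c ≤ sortDown hY.eigenvalues i :=
  core (es_canon hX) (es_canon hY) h i

lemma eig_mono {X Y : Matrix (Fin d) (Fin d) ℂ} (hX : X.IsHermitian) (hY : Y.IsHermitian)
    (h : (Y - X).PosSemidef) (i : Fin d) :
    sortDown hX.eigenvalues i ≤ sortDown hY.eigenvalues i := by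
  have := eig_le hX hY (c := 0) (fun x => by
    have h1 := qf_psd h x
    have h2 : qf (Y - X) x = qf Y x - qf X x := qf_sub Y X x
    linarith) i
  linarith [this]

lemma eig_shift {X : Matrix (Fin d) (Fin d) ℂ} (hX : X.IsHermitian) (c : ℝ)
    (hXc : (X - (c:ℂ) • 1).IsHermitian) (i : Fin d) :
    sortDown hXc.eigenvalues i = sortDown hX.eigenvalues i - c := by
  have key : ∀ x : Fin d → ℂ, qf (X - (c:ℂ) • 1) x = qf X x - c * nsq x := by
    intro x
    rw [qf_sub, qf_smul_one]
  have h1 := eig_le hX hXc (c := -c) (fun x => by rw [key x]; ring_nf; exact le_refl _) i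
  have h2 := eig_le hXc hX (c := c) (fun x => by rw [key x]; ring_nf; exact le_refl _) i
  linarith

lemma trace_re_eq_sum_eig {X : Matrix (Fin d) (Fin d) ℂ} (hX : X.IsHermitian) :
    X.trace.re = ∑ i, sortDown hX.eigenvalues i := by
  have h1 : X.trace = ((∑ i, hX.eigenvalues i : ℝ) : ℂ) := by
    conv_lhs => rw [hX.spectral_theorem, Unitary.conjStarAlgAut_apply]
    rw [Matrix.trace_mul_cycle, Unitary.coe_star_mul_self, Matrix.one_mul,
      Matrix.trace_diagonal]
    push_cast
    rfl
  rw [h1, Complex.ofReal_re]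
  exact (Equiv.sum_comp (dPerm hX.eigenvalues) hX.eigenvalues).symm

lemma card_filter_lt (k : ℕ) (hk : k ≤ d) :
    (Finset.univ.filter fun j : Fin d => (j : ℕ) < k).card = k := by
  have h : (Finset.univ.filter fun j : Fin d => (j : ℕ) < k).card = (Finset.range k).card :=
    Finset.card_bij (fun j _ => (j : ℕ))
      (fun j hj => Finset.mem_range.mpr (by simpa using (Finset.mem_filter.mp hj).2))
      (fun j1 h1 j2 h2 h => Fin.val_injective h)
      (fun m hm => ⟨⟨m, lt_of_lt_of_le (Finset.mem_range.mp hm) hk⟩,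
        Finset.mem_filter.mpr ⟨Finset.mem_univ _, Finset.mem_range.mp hm⟩, rfl⟩)
  rw [h, Finset.card_range]

lemma smul_one_hermitian (c : ℝ) :
    ((c : ℂ) • (1 : Matrix (Fin d) (Fin d) ℂ)).IsHermitian := by
  rw [Matrix.smul_one_eq_diagonal]
  exact Matrix.isHermitian_diagonal_iff.mpr fun i => Complex.conj_ofReal c

/-- eigensystem for a functional-calculus style matrix built from the unitary of `X`. -/
lemma es_calc {X : Matrix (Fin d) (Fin d) ℂ} (hX : X.IsHermitian) (f : Fin d → ℝ) :
    ES ((hX.eigenvectorUnitary : Matrix (Fin d) (Fin d) ℂ)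
        * Matrix.diagonal (fun i => (f i : ℂ))
        * star (hX.eigenvectorUnitary : Matrix (Fin d) (Fin d) ℂ))
      (fun i => ⇑(hX.eigenvectorBasis i)) f := by
  refine ⟨(es_canon hX).ortho, (es_canon hX).complete, fun i => ?_⟩
  rw [← Matrix.mulVec_mulVec, ← Matrix.mulVec_mulVec, hX.star_eigenvectorUnitary_mulVec,
    Matrix.diagonal_mulVec_single, mul_one,
    show (Pi.single i ((f i : ℂ)) : Fin d → ℂ) = (f i : ℂ) • (Pi.single i (1:ℂ) : Fin d → ℂ) from by
      rw [← Pi.single_smul, smul_eq_mul, mul_one],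
    Matrix.mulVec_smul, hX.eigenvectorUnitary_mulVec]

lemma posPart {X : Matrix (Fin d) (Fin d) ℂ} (hX : X.IsHermitian) :
    ∃ P : Matrix (Fin d) (Fin d) ℂ, P.PosSemidef ∧ (P - X).PosSemidef ∧
      P.trace.re = ∑ i, max (hX.eigenvalues i) 0 := by
  classical
  refine ⟨(hX.eigenvectorUnitary : Matrix (Fin d) (Fin d) ℂ)
    * Matrix.diagonal (fun i => ((max (hX.eigenvalues i) 0 : ℝ) : ℂ))
    * star (hX.eigenvectorUnitary : Matrix (Fin d) (Fin d) ℂ), ?_, ?_, ?_⟩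
  · rw [Matrix.star_eq_conjTranspose]
    exact (Matrix.posSemidef_diagonal_iff.mpr fun i =>
      (by exact_mod_cast le_max_right _ 0 : (0:ℂ) ≤ _)).mul_mul_conjTranspose_same _
  · have h2 : X = (hX.eigenvectorUnitary : Matrix (Fin d) (Fin d) ℂ)
        * Matrix.diagonal (fun i => ((hX.eigenvalues i : ℝ) : ℂ))
        * star (hX.eigenvectorUnitary : Matrix (Fin d) (Fin d) ℂ) := hX.spectral_theorem
    have h3 : (hX.eigenvectorUnitary : Matrix (Fin d) (Fin d) ℂ)
        * Matrix.diagonal (fun i => ((max (hX.eigenvalues i) 0 : ℝ) : ℂ))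
        * star (hX.eigenvectorUnitary : Matrix (Fin d) (Fin d) ℂ) - X
        = (hX.eigenvectorUnitary : Matrix (Fin d) (Fin d) ℂ)
        * Matrix.diagonal (fun i => ((max (hX.eigenvalues i) 0 - hX.eigenvalues i : ℝ) : ℂ))
        * star (hX.eigenvectorUnitary : Matrix (Fin d) (Fin d) ℂ) := by
      calc _ = (hX.eigenvectorUnitary : Matrix (Fin d) (Fin d) ℂ)
            * Matrix.diagonal (fun i => ((max (hX.eigenvalues i) 0 : ℝ) : ℂ))
            * star (hX.eigenvectorUnitary : Matrix (Fin d) (Fin d) ℂ)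
            - (hX.eigenvectorUnitary : Matrix (Fin d) (Fin d) ℂ)
            * Matrix.diagonal (fun i => ((hX.eigenvalues i : ℝ) : ℂ))
            * star (hX.eigenvectorUnitary : Matrix (Fin d) (Fin d) ℂ) := by
              exact congrArg (fun Z => _ - Z) h2
        _ = _ := by
              rw [← Matrix.sub_mul, ← Matrix.mul_sub, Matrix.diagonal_sub]
              congr 1
              congr 1
              congr 1
              funext i
              push_cast
              ring
    rw [h3, Matrix.star_eq_conjTranspose]
    exact (Matrix.posSemidef_diagonal_iff.mpr fun i =>
      (by exact_mod_cast sub_nonneg.mpr (le_max_left _ 0) : (0:ℂ) ≤ _)).mul_mul_conjTranspose_same _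
  · rw [Matrix.trace_mul_cycle, Unitary.coe_star_mul_self, Matrix.one_mul,
      Matrix.trace_diagonal, Complex.re_sum]
    exact Finset.sum_congr rfl fun i _ => Complex.ofReal_re _

/-- **Lidskii's inequality** -/
lemma lidskii {A B : Matrix (Fin d) (Fin d) ℂ} (hA : A.IsHermitian) (hB : B.IsHermitian)
    (hAB : (A + B).IsHermitian) (T : Finset (Fin d)) :
    ∑ i ∈ T, (sortDown hAB.eigenvalues i - sortDown hA.eigenvalues i) ≤
      ∑ j ∈ Finset.univ.filter (fun j : Fin d => (j : ℕ) < T.card), sortDown hB.eigenvalues j := by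
  classical
  rcases Nat.eq_zero_or_pos T.card with hk0 | hkpos
  · rw [Finset.card_eq_zero.mp hk0]
    simp
  · have hkd : T.card ≤ d := by
      calc T.card ≤ Finset.univ.card := Finset.card_le_card (Finset.subset_univ T)
        _ = d := by simp
    set kidx : Fin d := ⟨T.card - 1, by omega⟩ with hkidx
    set c : ℝ := sortDown hB.eigenvalues kidx with hc
    have hB' : (B - (c:ℂ) • 1).IsHermitian := hB.sub (smul_one_hermitian c)
    have hM' : ((A + B) - (c:ℂ) • 1).IsHermitian := hAB.sub (smul_one_hermitian c)
    obtain ⟨P, hPpsd, hPB', htrP⟩ := posPart hB'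
    have hAP : (A + P).IsHermitian := hA.add hPpsd.isHermitian
    have hshift1 : ∀ i, sortDown hM'.eigenvalues i = sortDown hAB.eigenvalues i - c :=
      eig_shift hAB c hM'
    have hshift2 : ∀ i, sortDown hB'.eigenvalues i = sortDown hB.eigenvalues i - c :=
      eig_shift hB c hB'
    have hmono1 : ∀ i, sortDown hM'.eigenvalues i ≤ sortDown hAP.eigenvalues i := by
      intro i
      apply eig_mono hM' hAP _ i
      rw [show (A + P) - ((A + B) - (c:ℂ) • 1) = P - (B - (c:ℂ) • 1) from by abel]
      exact hPB'
    have hmono2 : ∀ i, sortDown hA.eigenvalues i ≤ sortDown hAP.eigenvalues i := by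
      intro i
      apply eig_mono hA hAP _ i
      rw [show (A + P) - A = P from by abel]
      exact hPpsd
    have hkidx0 : sortDown hB'.eigenvalues kidx = 0 := by
      rw [hshift2 kidx]
      exact sub_eq_zero_of_eq hc.symm
    have hmax : ∀ s : Fin d, max (sortDown hB'.eigenvalues s) 0
        = if (s : ℕ) < T.card then sortDown hB'.eigenvalues s else 0 := by
      intro s
      by_cases hs : (s : ℕ) < T.card
      · rw [if_pos hs]
        apply max_eq_left
        rw [← hkidx0]
        refine sortDown_antitone _ ?_
        rw [Fin.le_def]
        show (s : ℕ) ≤ T.card - 1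
        omega
      · rw [if_neg hs]
        apply max_eq_right
        rw [← hkidx0]
        refine sortDown_antitone _ ?_
        rw [Fin.le_def]
        show T.card - 1 ≤ (s : ℕ)
        omega
    have htrP2 : P.trace.re = ∑ j ∈ Finset.univ.filter (fun j : Fin d => (j : ℕ) < T.card),
        sortDown hB'.eigenvalues j := by
      rw [htrP, ← Equiv.sum_comp (dPerm hB'.eigenvalues) (fun i => max (hB'.eigenvalues i) 0)]
      rw [show (fun s => (fun i => max (hB'.eigenvalues i) 0) ((dPerm hB'.eigenvalues) s))
          = fun s => max (sortDown hB'.eigenvalues s) 0 from rfl]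
      rw [Finset.sum_congr rfl (fun s _ => hmax s), Finset.sum_ite, Finset.sum_const_zero,
        add_zero]
    calc ∑ i ∈ T, (sortDown hAB.eigenvalues i - sortDown hA.eigenvalues i)
        = ∑ i ∈ T, ((sortDown hM'.eigenvalues i - sortDown hA.eigenvalues i) + c) := by
          refine Finset.sum_congr rfl fun i _ => ?_
          rw [hshift1 i]; ring
      _ = (∑ i ∈ T, (sortDown hM'.eigenvalues i - sortDown hA.eigenvalues i)) + T.card * c := by
          rw [Finset.sum_add_distrib, Finset.sum_const, nsmul_eq_mul]
      _ ≤ (∑ i ∈ T, (sortDown hAP.eigenvalues i - sortDown hA.eigenvalues i)) + T.card * c := by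
          apply add_le_add_left
          exact Finset.sum_le_sum fun i _ => sub_le_sub_right (hmono1 i) _
      _ ≤ (∑ i, (sortDown hAP.eigenvalues i - sortDown hA.eigenvalues i)) + T.card * c := by
          apply add_le_add_left
          exact Finset.sum_le_sum_of_subset_of_nonneg (Finset.subset_univ T)
            (fun i _ _ => sub_nonneg.mpr (hmono2 i))
      _ = ((A + P).trace.re - A.trace.re) + T.card * c := by
          rw [Finset.sum_sub_distrib, trace_re_eq_sum_eig hAP, trace_re_eq_sum_eig hA]
      _ = P.trace.re + T.card * c := by
          rw [Matrix.trace_add, Complex.add_re]; ring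
      _ = (∑ j ∈ Finset.univ.filter (fun j : Fin d => (j : ℕ) < T.card),
            sortDown hB'.eigenvalues j) + T.card * c := by rw [htrP2]
      _ = (∑ j ∈ Finset.univ.filter (fun j : Fin d => (j : ℕ) < T.card),
            (sortDown hB.eigenvalues j - c)) + T.card * c := by
          refine congrArg (· + (T.card : ℝ) * c) ?_
          exact Finset.sum_congr rfl fun j _ => hshift2 j
      _ = ∑ j ∈ Finset.univ.filter (fun j : Fin d => (j : ℕ) < T.card),
            sortDown hB.eigenvalues j := by
          rw [Finset.sum_sub_distrib, Finset.sum_const, nsmul_eq_mul, card_filter_lt T.card hkd]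
          ring

/-- uniqueness of sorted eigenvalues through eigensystems -/
lemma es_unique {M : Matrix (Fin d) (Fin d) ℂ} {u a} (hM : M.IsHermitian) (h : ES M u a)
    (i : Fin d) : sortDown a i = sortDown hM.eigenvalues i := by
  have h1 := core h (es_canon hM) (c := 0) (fun x => by simp) i
  have h2 := core (es_canon hM) h (c := 0) (fun x => by simp) i
  simp only [add_zero] at h1 h2
  linarith

lemma sortDown_neg (m : Fin d → ℝ) (i : Fin d) :
    sortDown (fun j => -(m j)) i = -((m ∘ Tuple.sort m) i) := by
  set f : Fin d → ℝ := fun j => -(m j) with hf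
  have hmono : Monotone (f ∘ (Fin.revPerm.trans (Tuple.sort m) : Equiv.Perm (Fin d))) := by
    intro s t hst
    have : t.rev ≤ s.rev := Fin.rev_le_rev.mpr hst
    have := Tuple.monotone_sort m this
    simp only [hf, Function.comp_apply, Equiv.coe_trans, Fin.revPerm_apply]
    simp only [Function.comp_apply] at this
    linarith
  have heq := Tuple.comp_sort_eq_comp_iff_monotone.mpr hmono
  have : sortDown f i = (f ∘ (Fin.revPerm.trans (Tuple.sort m) : Equiv.Perm (Fin d))) i.rev := by
    rw [heq]; rfl
  rw [this]
  simp [hf, Fin.rev_rev]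

lemma eig_neg {ω : Matrix (Fin d) (Fin d) ℂ} (hω : ω.IsHermitian) (hnω : (-ω).IsHermitian)
    (i : Fin d) : sortDown hnω.eigenvalues i = -(eigUp ω hω i) := by
  have h1 := es_unique hnω (es_canon hω).neg i
  rw [← h1, sortDown_neg]
  rfl

lemma eig_congr {X Y : Matrix (Fin d) (Fin d) ℂ} (h : X = Y) (hX : X.IsHermitian)
    (hY : Y.IsHermitian) : hX.eigenvalues = hY.eigenvalues := by subst h; rfl

lemma sum_range_dite (f : Fin d → ℝ) (k : ℕ) (hk : k ≤ d) :
    ∑ j ∈ Finset.range k, (if h : j < d then f ⟨j, h⟩ else 0)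
      = ∑ j ∈ Finset.univ.filter (fun j : Fin d => (j : ℕ) < k), f j := by
  refine Finset.sum_bij' (fun (a : ℕ) (ha : a ∈ Finset.range k) =>
      (⟨a, lt_of_lt_of_le (Finset.mem_range.mp ha) hk⟩ : Fin d))
    (fun (a : Fin d) (_ : a ∈ Finset.univ.filter (fun j : Fin d => (j : ℕ) < k)) => (a : ℕ))
    ?_ ?_ ?_ ?_ ?_
  · intro a ha
    exact Finset.mem_filter.mpr ⟨Finset.mem_univ _, Finset.mem_range.mp ha⟩
  · intro a ha
    exact Finset.mem_range.mpr (by simpa using (Finset.mem_filter.mp ha).2)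
  · intro a ha; rfl
  · intro a ha; rfl
  · intro a ha
    rw [dif_pos]

/-- the main Lidskii-type bound in the form needed -/
lemma main_maj {ω Δ : Matrix (Fin d) (Fin d) ℂ} (hω : ω.IsHermitian) (hΔ : Δ.IsHermitian)
    (hM : (ω + Δ).IsHermitian) (T : Finset (Fin d)) :
    ∑ i ∈ T, (eigDown Δ hΔ i + eigUp ω hω i) ≤
      ∑ j ∈ Finset.univ.filter (fun j : Fin d => (j : ℕ) < T.card),
        sortDown hM.eigenvalues j := by
  have hnω : (-ω).IsHermitian := hω.neg
  have hAB : ((-ω) + (ω + Δ)).IsHermitian := by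
    rw [show (-ω) + (ω + Δ) = Δ from by abel]; exact hΔ
  have hL := lidskii hnω hM hAB T
  have h1 : ∀ i, sortDown hAB.eigenvalues i = eigDown Δ hΔ i := by
    intro i
    have := eig_congr (show (-ω) + (ω + Δ) = Δ from by abel) hAB hΔ
    rw [show sortDown hAB.eigenvalues i = sortDown hΔ.eigenvalues i from by rw [this]]
    rfl
  have h2 : ∀ i, sortDown hnω.eigenvalues i = -(eigUp ω hω i) := eig_neg hω hnω
  calc ∑ i ∈ T, (eigDown Δ hΔ i + eigUp ω hω i)
      = ∑ i ∈ T, (sortDown hAB.eigenvalues i - sortDown hnω.eigenvalues i) := by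
        refine Finset.sum_congr rfl fun i _ => ?_
        rw [h1 i, h2 i]; ring
    _ ≤ _ := hL

lemma sum_eigenvalues_eq {X : Matrix (Fin d) (Fin d) ℂ} (hX : X.IsHermitian) :
    ∑ i, hX.eigenvalues i = X.trace.re := by
  rw [trace_re_eq_sum_eig hX]
  exact (Equiv.sum_comp (dPerm hX.eigenvalues) hX.eigenvalues).symm

lemma sum_eigUp_eq {X : Matrix (Fin d) (Fin d) ℂ} (hX : X.IsHermitian) :
    ∑ i, eigUp X hX i = X.trace.re := by
  rw [← sum_eigenvalues_eq hX]
  exact Equiv.sum_comp (Tuple.sort hX.eigenvalues) hX.eigenvalues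

end VNAux

open VNAux in
private theorem vnEntropy_le_shannonH' {d : ℕ} (ω Δ : Matrix (Fin d) (Fin d) ℂ)
    (hω : ω.IsHermitian) (hΔ : Δ.IsHermitian) (hpos : (ω + Δ).PosSemidef) :
    vnEntropy (ω + Δ) ≤ shannonH (fun j => eigDown Δ hΔ j + eigUp ω hω j) := by
  classical
  have hM : (ω + Δ).IsHermitian := hpos.isHermitian
  set v : Fin d → ℝ := fun j => eigDown Δ hΔ j + eigUp ω hω j with hv
  set X : ℕ → ℝ := fun j => if h : j < d then sortDown v ⟨j, h⟩ else 0 with hX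
  set Y : ℕ → ℝ := fun j => if h : j < d then sortDown hM.eigenvalues ⟨j, h⟩ else 0 with hY
  -- rewrite both sides as Finset.range sums
  have hlhs : vnEntropy (ω + Δ) = ∑ j ∈ Finset.range d, eta (Y j) := by
    rw [vnEntropy, dif_pos hM,
      ← Equiv.sum_comp (dPerm hM.eigenvalues) (fun i => eta (hM.eigenvalues i)),
      ← Fin.sum_univ_eq_sum_range (fun j => eta (Y j)) d]
    refine Finset.sum_congr rfl fun i _ => ?_
    rw [hY]
    simp only [Fin.is_lt, dif_pos, Fin.eta]
    rfl
  have hrhs : shannonH v = ∑ j ∈ Finset.range d, eta (X j) := by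
    rw [shannonH, ← Equiv.sum_comp (dPerm v) (fun i => eta (v i)),
      ← Fin.sum_univ_eq_sum_range (fun j => eta (X j)) d]
    refine Finset.sum_congr rfl fun i _ => ?_
    rw [hX]
    simp only [Fin.is_lt, dif_pos, Fin.eta]
    rfl
  rw [hlhs, hrhs]
  -- apply the HLP inequality
  apply hlp d X Y
  · intro i j hij hj
    simp only [hX]
    rw [dif_pos hj, dif_pos (lt_of_le_of_lt hij hj)]
    exact sortDown_antitone v (Fin.mk_le_mk.mpr hij)
  · intro j hj
    simp only [hY]
    rw [dif_pos hj]
    exact hpos.eigenvalues_nonneg _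
  · intro k hk
    simp only [hX, hY]
    rw [sum_range_dite (sortDown v) k hk,
      sum_range_dite (sortDown hM.eigenvalues) k hk]
    set F : Finset (Fin d) := Finset.univ.filter (fun j : Fin d => (j : ℕ) < k) with hF
    have hsum1 : ∑ j ∈ F, sortDown v j = ∑ i ∈ F.image (dPerm v), v i := by
      rw [Finset.sum_image (fun a _ b _ h => (dPerm v).injective h)]
      rfl
    have hcard : (F.image (dPerm v)).card = k := by
      rw [Finset.card_image_of_injective _ (dPerm v).injective, hF, card_filter_lt k hk]
    rw [hsum1]
    have := main_maj hω hΔ hM (F.image (dPerm v))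
    rw [hcard] at this
    exact this
  · simp only [hX, hY]
    rw [sum_range_dite (sortDown v) d le_rfl,
      sum_range_dite (sortDown hM.eigenvalues) d le_rfl,
      Finset.filter_true_of_mem (fun j _ => j.isLt)]
    have e1 : ∑ j : Fin d, sortDown v j = ∑ j, v j := Equiv.sum_comp (dPerm v) v
    have e2 : ∑ j : Fin d, sortDown hM.eigenvalues j = (ω + Δ).trace.re :=
      (trace_re_eq_sum_eig hM).symm
    rw [e1, e2]
    have h1 : ∑ j, v j = Δ.trace.re + ω.trace.re := by
      rw [hv]
      rw [Finset.sum_add_distrib]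
      congr 1
      · rw [show ∑ i, eigDown Δ hΔ i = ∑ i, sortDown hΔ.eigenvalues i from rfl,
          ← trace_re_eq_sum_eig hΔ]
      · exact sum_eigUp_eq hω
    rw [h1, Matrix.trace_add, Complex.add_re]
    ring

end VNAuxSection

/-- if `ω + Δ ≥ 0` then `S(ω + Δ) ≤ H(λ^↓(Δ) + λ^↑(ω))`. -/
theorem vnEntropy_le_shannonH {d : ℕ} (ω Δ : Matrix (Fin d) (Fin d) ℂ)
    (hω : ω.IsHermitian) (hΔ : Δ.IsHermitian) (hpos : (ω + Δ).PosSemidef) :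
    vnEntropy (ω + Δ) ≤ shannonH (fun j => eigDown Δ hΔ j + eigUp ω hω j) := by
  exact vnEntropy_le_shannonH' ω Δ hω hΔ hpos
end
end

section
/- Lidskii's theorem: for Hermitian d×d matrices A and B, the vector λ^↓(A) + λ^↑(B) is majorized by the vector of eigenvalues of A + B. -/
open Matrix BigOperators
open scoped ComplexOrder

noncomputable section

open Module Submodule



/-- quadratic form -/
def qf (M : Matrix (Fin d) (Fin d) ℂ) (x : EuclideanSpace ℂ (Fin d)) : ℝ :=
  (star ((WithLp.equiv 2 _) x) ⬝ᵥ (M *ᵥ (WithLp.equiv 2 _) x)).re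

lemma qf_eq_inner (M : Matrix (Fin d) (Fin d) ℂ) (x : EuclideanSpace ℂ (Fin d)) :
    qf M x = (inner ℂ x (Matrix.toEuclideanLin M x) : ℂ).re := by
  rw [toEuclideanLin_apply, EuclideanSpace.inner_eq_star_dotProduct, dotProduct_comm]
  simp [qf]

lemma toEuclideanLin_eigenvectorBasis {M : Matrix (Fin d) (Fin d) ℂ} (hM : M.IsHermitian)
    (j : Fin d) :
    Matrix.toEuclideanLin M (hM.eigenvectorBasis j) = hM.eigenvalues j • hM.eigenvectorBasis j := by
  rw [toEuclideanLin_apply, hM.mulVec_eigenvectorBasis]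
  rw [RCLike.real_smul_eq_coe_smul (K := ℂ)]
  simp

lemma qf_eq_sum {M : Matrix (Fin d) (Fin d) ℂ} (hM : M.IsHermitian)
    (x : EuclideanSpace ℂ (Fin d)) :
    qf M x = ∑ j, hM.eigenvalues j * ‖hM.eigenvectorBasis.repr x j‖^2 := by
  set b := hM.eigenvectorBasis with hb
  rw [qf_eq_inner]
  have hx : Matrix.toEuclideanLin M x
      = ∑ j, ((b.repr x j * hM.eigenvalues j) • b j) := by
    conv_lhs => rw [← b.sum_repr x]
    rw [map_sum]
    refine Finset.sum_congr rfl fun j _ => ?_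
    rw [_root_.map_smul, toEuclideanLin_eigenvectorBasis hM j, RCLike.real_smul_eq_coe_smul (K := ℂ),
      smul_smul]
    simp [hb]
  rw [hx, inner_sum]
  rw [Complex.re_sum]
  refine Finset.sum_congr rfl fun j _ => ?_
  rw [inner_smul_right, ← inner_conj_symm, ← b.repr_apply_apply]
  have : b.repr x j * ↑(hM.eigenvalues j) * (starRingEnd ℂ) (b.repr x j)
      = (hM.eigenvalues j : ℂ) * (b.repr x j * (starRingEnd ℂ) (b.repr x j)) := by ring
  rw [this, Complex.mul_conj]
  rw [← Complex.ofReal_mul]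
  rw [Complex.ofReal_re]
  congr 1
  rw [Complex.normSq_eq_norm_sq]

lemma norm_sq_eq_sum {M : Matrix (Fin d) (Fin d) ℂ} (hM : M.IsHermitian)
    (x : EuclideanSpace ℂ (Fin d)) :
    ‖x‖^2 = ∑ j, ‖hM.eigenvectorBasis.repr x j‖^2 := by
  rw [← hM.eigenvectorBasis.repr.norm_map x, EuclideanSpace.norm_eq,
    Real.sq_sqrt (by positivity)]

lemma qf_add (M N : Matrix (Fin d) (Fin d) ℂ) (x : EuclideanSpace ℂ (Fin d)) :
    qf (M + N) x = qf M x + qf N x := by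
  simp [qf, add_mulVec, dotProduct_add]

lemma qf_neg (M : Matrix (Fin d) (Fin d) ℂ) (x : EuclideanSpace ℂ (Fin d)) :
    qf (-M) x = -qf M x := by
  simp [qf, neg_mulVec, dotProduct_neg]

lemma star_dot_self_re (x : EuclideanSpace ℂ (Fin d)) :
    (star ((WithLp.equiv 2 _) x) ⬝ᵥ ((WithLp.equiv 2 _) x)).re = ‖x‖^2 := by
  have := EuclideanSpace.inner_eq_star_dotProduct x x
  rw [dotProduct_comm, show ((WithLp.equiv 2 (Fin d → ℂ)) x ⬝ᵥ star ((WithLp.equiv 2 (Fin d → ℂ)) x)) = inner ℂ x x from this.symm]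
  have h2 := @inner_self_eq_norm_sq ℂ _ _ _ _ x
  rw [← h2]
  rfl

lemma qf_smul_one (c : ℝ) (x : EuclideanSpace ℂ (Fin d)) :
    qf ((c:ℂ) • (1 : Matrix (Fin d) (Fin d) ℂ)) x = c * ‖x‖^2 := by
  rw [qf, smul_mulVec, one_mulVec, dotProduct_smul, ← star_dot_self_re x]
  simp [Complex.mul_re]

lemma qf_nonneg_of_posSemidef {N : Matrix (Fin d) (Fin d) ℂ} (hN : N.PosSemidef)
    (x : EuclideanSpace ℂ (Fin d)) : 0 ≤ qf N x := by
  have := hN.dotProduct_mulVec_nonneg ((WithLp.equiv 2 _) x)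
  rw [Complex.le_def] at this
  simpa [qf] using this.1

lemma norm_sq_pos_of_ne_zero {x : EuclideanSpace ℂ (Fin d)} (hx : x ≠ 0) : 0 < ‖x‖^2 := by
  have : ‖x‖ ≠ 0 := norm_ne_zero_iff.mpr hx
  positivity

lemma repr_eq_zero_of_mem_span {M : Matrix (Fin d) (Fin d) ℂ} (hM : M.IsHermitian)
    {S : Finset (Fin d)} {x : EuclideanSpace ℂ (Fin d)}
    (hx : x ∈ Submodule.span ℂ (hM.eigenvectorBasis '' ↑S)) {j : Fin d} (hj : j ∉ S) :
    hM.eigenvectorBasis.repr x j = 0 := by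
  rw [hM.eigenvectorBasis.repr_apply_apply]
  have hker : Submodule.span ℂ (hM.eigenvectorBasis '' ↑S)
      ≤ LinearMap.ker ((innerSL ℂ (hM.eigenvectorBasis j)).toLinearMap) := by
    rw [Submodule.span_le]
    rintro y ⟨i, hi, rfl⟩
    simp only [SetLike.mem_coe, LinearMap.mem_ker, ContinuousLinearMap.coe_coe, innerSL_apply_apply]
    exact hM.eigenvectorBasis.orthonormal.2 (fun h => hj (h ▸ hi))
  simpa using hker hx

lemma exists_ne_zero_mem_inf (V W : Submodule ℂ (EuclideanSpace ℂ (Fin d)))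
    (h : d < finrank ℂ V + finrank ℂ W) : ∃ x, x ∈ V ⊓ W ∧ x ≠ 0 := by
  have h1 := Submodule.finrank_sup_add_finrank_inf_eq V W
  have h2 : finrank ℂ ↥(V ⊔ W) ≤ d := by
    simpa [finrank_euclideanSpace] using (V ⊔ W).finrank_le
  have : 0 < finrank ℂ ↥(V ⊓ W) := by omega
  obtain ⟨⟨x, hx⟩, hx0⟩ := Module.finrank_pos_iff_exists_ne_zero.mp this
  exact ⟨x, hx, by simpa [Submodule.mk_eq_zero] using hx0⟩

lemma finrank_span_eigen {M : Matrix (Fin d) (Fin d) ℂ} (hM : M.IsHermitian)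
    (S : Finset (Fin d)) :
    finrank ℂ (Submodule.span ℂ (hM.eigenvectorBasis '' ↑S)) = S.card := by
  rw [Set.image_eq_range]
  rw [finrank_span_eq_card (b := fun i : ↥(↑S : Set (Fin d)) => hM.eigenvectorBasis ↑i)
    ((hM.eigenvectorBasis.orthonormal.linearIndependent).comp _ Subtype.val_injective)]
  simp

variable {d : ℕ}

lemma qf_le_on_span {M : Matrix (Fin d) (Fin d) ℂ} (hM : M.IsHermitian)
    (S : Finset (Fin d)) (c : ℝ) (hc : ∀ j ∈ S, hM.eigenvalues j ≤ c)
    {x : EuclideanSpace ℂ (Fin d)}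
    (hx : x ∈ Submodule.span ℂ (hM.eigenvectorBasis '' ↑S)) :
    qf M x ≤ c * ‖x‖^2 := by
  rw [qf_eq_sum hM, norm_sq_eq_sum hM, Finset.mul_sum]
  refine Finset.sum_le_sum fun j _ => ?_
  by_cases hj : j ∈ S
  · exact mul_le_mul_of_nonneg_right (hc j hj) (by positivity)
  · rw [repr_eq_zero_of_mem_span hM hx hj]; simp

lemma qf_ge_on_span {M : Matrix (Fin d) (Fin d) ℂ} (hM : M.IsHermitian)
    (S : Finset (Fin d)) (c : ℝ) (hc : ∀ j ∈ S, c ≤ hM.eigenvalues j)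
    {x : EuclideanSpace ℂ (Fin d)}
    (hx : x ∈ Submodule.span ℂ (hM.eigenvectorBasis '' ↑S)) :
    c * ‖x‖^2 ≤ qf M x := by
  rw [qf_eq_sum hM, norm_sq_eq_sum hM, Finset.mul_sum]
  refine Finset.sum_le_sum fun j _ => ?_
  by_cases hj : j ∈ S
  · exact mul_le_mul_of_nonneg_right (hc j hj) (by positivity)
  · rw [repr_eq_zero_of_mem_span hM hx hj]; simp

lemma eigUp_monotone {M : Matrix (Fin d) (Fin d) ℂ} (hM : M.IsHermitian) :
    Monotone (eigUp M hM) := Tuple.monotone_sort _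

lemma mem_sortimg_Iic {M : Matrix (Fin d) (Fin d) ℂ} (hM : M.IsHermitian) (i : Fin d) :
    ∀ j ∈ (Finset.Iic i).image (Tuple.sort hM.eigenvalues),
      hM.eigenvalues j ≤ eigUp M hM i := by
  rintro j hj
  obtain ⟨j', hj', rfl⟩ := Finset.mem_image.mp hj
  exact eigUp_monotone hM (Finset.mem_Iic.mp hj')

lemma mem_sortimg_Ici {M : Matrix (Fin d) (Fin d) ℂ} (hM : M.IsHermitian) (i : Fin d) :
    ∀ j ∈ (Finset.Ici i).image (Tuple.sort hM.eigenvalues),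
      eigUp M hM i ≤ hM.eigenvalues j := by
  rintro j hj
  obtain ⟨j', hj', rfl⟩ := Finset.mem_image.mp hj
  exact eigUp_monotone hM (Finset.mem_Ici.mp hj')

lemma le_eigUp_of {M : Matrix (Fin d) (Fin d) ℂ} (hM : M.IsHermitian) (i : Fin d)
    (W : Submodule ℂ (EuclideanSpace ℂ (Fin d))) (hW : d - (i:ℕ) ≤ finrank ℂ W) (c : ℝ)
    (h : ∀ x ∈ W, c * ‖x‖^2 ≤ qf M x) : c ≤ eigUp M hM i := by
  set S := (Finset.Iic i).image (Tuple.sort hM.eigenvalues) with hS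
  have hcard : S.card = (i:ℕ) + 1 := by
    rw [hS, Finset.card_image_of_injective _ (Equiv.injective _), Fin.card_Iic]
  obtain ⟨x, hx, hx0⟩ := exists_ne_zero_mem_inf
    (Submodule.span ℂ (hM.eigenvectorBasis '' ↑S)) W
    (by rw [finrank_span_eigen, hcard]; have := i.isLt; omega)
  have h1 : qf M x ≤ eigUp M hM i * ‖x‖^2 :=
    qf_le_on_span hM S _ (mem_sortimg_Iic hM i) hx.1
  have h2 := h x hx.2
  exact le_of_mul_le_mul_right (h2.trans h1) (norm_sq_pos_of_ne_zero hx0)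

lemma eigUp_le_of {M : Matrix (Fin d) (Fin d) ℂ} (hM : M.IsHermitian) (i : Fin d)
    (W : Submodule ℂ (EuclideanSpace ℂ (Fin d))) (hW : (i:ℕ) + 1 ≤ finrank ℂ W) (c : ℝ)
    (h : ∀ x ∈ W, qf M x ≤ c * ‖x‖^2) : eigUp M hM i ≤ c := by
  set S := (Finset.Ici i).image (Tuple.sort hM.eigenvalues) with hS
  have hcard : S.card = d - (i:ℕ) := by
    rw [hS, Finset.card_image_of_injective _ (Equiv.injective _), Fin.card_Ici]
  obtain ⟨x, hx, hx0⟩ := exists_ne_zero_mem_inf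
    (Submodule.span ℂ (hM.eigenvectorBasis '' ↑S)) W
    (by rw [finrank_span_eigen, hcard]; have := i.isLt; omega)
  have h1 : eigUp M hM i * ‖x‖^2 ≤ qf M x :=
    qf_ge_on_span hM S _ (mem_sortimg_Ici hM i) hx.1
  have h2 := h x hx.2
  exact le_of_mul_le_mul_right (h1.trans h2) (norm_sq_pos_of_ne_zero hx0)

lemma eigUp_le_add_posSemidef {M N : Matrix (Fin d) (Fin d) ℂ} (hM : M.IsHermitian)
    (hN : N.PosSemidef) (hMN : (M + N).IsHermitian) (i : Fin d) :
    eigUp M hM i ≤ eigUp (M + N) hMN i := by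
  refine le_eigUp_of hMN i
    (Submodule.span ℂ (hM.eigenvectorBasis '' ↑((Finset.Ici i).image (Tuple.sort hM.eigenvalues))))
    ?_ _ (fun x hx => ?_)
  · rw [finrank_span_eigen, Finset.card_image_of_injective _ (Equiv.injective _), Fin.card_Ici]
  · rw [qf_add]
    have h1 := qf_ge_on_span hM _ _ (mem_sortimg_Ici hM i) hx
    have h2 := qf_nonneg_of_posSemidef hN x
    linarith

lemma eigUp_add_smul_one {M : Matrix (Fin d) (Fin d) ℂ} (hM : M.IsHermitian) (c : ℝ)
    (h1 : (M + (c:ℂ) • (1 : Matrix (Fin d) (Fin d) ℂ)).IsHermitian) (i : Fin d) :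
    eigUp (M + (c:ℂ) • 1) h1 i = eigUp M hM i + c := by
  refine le_antisymm ?_ ?_
  · refine eigUp_le_of h1 i (Submodule.span ℂ (hM.eigenvectorBasis ''
      ↑((Finset.Iic i).image (Tuple.sort hM.eigenvalues)))) ?_ _ (fun x hx => ?_)
    · rw [finrank_span_eigen, Finset.card_image_of_injective _ (Equiv.injective _), Fin.card_Iic]
    · rw [qf_add, qf_smul_one]
      have h2 := qf_le_on_span hM _ _ (mem_sortimg_Iic hM i) hx
      linarith [add_mul (eigUp M hM i) c (‖x‖^2)]
  · refine le_eigUp_of h1 i (Submodule.span ℂ (hM.eigenvectorBasis ''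
      ↑((Finset.Ici i).image (Tuple.sort hM.eigenvalues)))) ?_ _ (fun x hx => ?_)
    · rw [finrank_span_eigen, Finset.card_image_of_injective _ (Equiv.injective _), Fin.card_Ici]
    · rw [qf_add, qf_smul_one]
      have h2 := qf_ge_on_span hM _ _ (mem_sortimg_Ici hM i) hx
      linarith [add_mul (eigUp M hM i) c (‖x‖^2)]

lemma eigUp_neg {B : Matrix (Fin d) (Fin d) ℂ} (hB : B.IsHermitian)
    (hnB : (-B).IsHermitian) (i : Fin d) :
    eigUp (-B) hnB i = - eigUp B hB i.rev := by
  have hrev : (i.rev : ℕ) = d - 1 - (i:ℕ) := by rw [Fin.val_rev]; omega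
  have hi := i.isLt
  refine le_antisymm ?_ ?_
  · refine eigUp_le_of hnB i (Submodule.span ℂ (hB.eigenvectorBasis ''
      ↑((Finset.Ici i.rev).image (Tuple.sort hB.eigenvalues)))) ?_ _ (fun x hx => ?_)
    · rw [finrank_span_eigen, Finset.card_image_of_injective _ (Equiv.injective _), Fin.card_Ici]
      omega
    · rw [qf_neg]
      have h2 := qf_ge_on_span hB _ _ (mem_sortimg_Ici hB i.rev) hx
      linarith [neg_mul (eigUp B hB i.rev) (‖x‖^2)]
  · refine le_eigUp_of hnB i (Submodule.span ℂ (hB.eigenvectorBasis ''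
      ↑((Finset.Iic i.rev).image (Tuple.sort hB.eigenvalues)))) ?_ _ (fun x hx => ?_)
    · rw [finrank_span_eigen, Finset.card_image_of_injective _ (Equiv.injective _), Fin.card_Iic]
      omega
    · rw [qf_neg]
      have h2 := qf_le_on_span hB _ _ (mem_sortimg_Iic hB i.rev) hx
      linarith [neg_mul (eigUp B hB i.rev) (‖x‖^2)]

lemma eigUp_congr {M M' : Matrix (Fin d) (Fin d) ℂ} (h : M = M') (hM : M.IsHermitian)
    (hM' : M'.IsHermitian) (i : Fin d) : eigUp M hM i = eigUp M' hM' i := by subst h; rfl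

lemma sum_eigenvalues_eq_retrace {M : Matrix (Fin d) (Fin d) ℂ} (hM : M.IsHermitian) :
    ∑ j, hM.eigenvalues j = M.trace.re := by
  conv_rhs => rw [hM.spectral_theorem, Unitary.conjStarAlgAut_apply]
  rw [Matrix.trace_mul_cycle, mem_unitaryGroup_iff'.mp (hM.eigenvectorUnitary).2, one_mul,
    Matrix.trace_diagonal]
  rw [Complex.re_sum]
  simp

lemma sum_eigUp {M : Matrix (Fin d) (Fin d) ℂ} (hM : M.IsHermitian) :
    ∑ j, eigUp M hM j = ∑ j, hM.eigenvalues j :=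
  Equiv.sum_comp (Tuple.sort hM.eigenvalues) hM.eigenvalues

lemma sum_eigDown {M : Matrix (Fin d) (Fin d) ℂ} (hM : M.IsHermitian) :
    ∑ j, eigDown M hM j = ∑ j, eigUp M hM j :=
  Equiv.sum_comp (Fin.revPerm) (eigUp M hM)

def posPartShift {N : Matrix (Fin d) (Fin d) ℂ} (hN : N.IsHermitian) (c : ℝ) :
    Matrix (Fin d) (Fin d) ℂ :=
  (hN.eigenvectorUnitary : Matrix (Fin d) (Fin d) ℂ)
    * Matrix.diagonal (fun j => ((max (hN.eigenvalues j - c) 0 : ℝ) : ℂ))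
    * star (hN.eigenvectorUnitary : Matrix (Fin d) (Fin d) ℂ)

lemma posPartShift_posSemidef {N : Matrix (Fin d) (Fin d) ℂ} (hN : N.IsHermitian) (c : ℝ) :
    (posPartShift hN c).PosSemidef := by
  rw [posPartShift, star_eq_conjTranspose]
  refine Matrix.PosSemidef.mul_mul_conjTranspose_same ?_ _
  rw [posSemidef_diagonal_iff]
  intro i
  rw [Complex.zero_le_real]
  exact le_max_right _ _

lemma posPartShift_key {N : Matrix (Fin d) (Fin d) ℂ} (hN : N.IsHermitian) (c : ℝ) :
    (posPartShift hN c + (c:ℂ) • 1 - N).PosSemidef := by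
  set U := (hN.eigenvectorUnitary : Matrix (Fin d) (Fin d) ℂ) with hU
  have hUU : U * star U = 1 := mem_unitaryGroup_iff.mp (hN.eigenvectorUnitary).2
  have hsmul : (c:ℂ) • (1 : Matrix (Fin d) (Fin d) ℂ)
      = U * Matrix.diagonal (fun _ => (c:ℂ)) * star U := by
    rw [← smul_one_eq_diagonal]
    rw [show U * ((c:ℂ) • (1 : Matrix (Fin d) (Fin d) ℂ)) * star U
        = (c:ℂ) • (U * 1 * star U) by simp [Matrix.mul_smul, Matrix.smul_mul], mul_one, hUU]
  have hdiag : Matrix.diagonal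
        (fun j => ((max (hN.eigenvalues j - c) 0 - (hN.eigenvalues j - c) : ℝ) : ℂ))
      = Matrix.diagonal (fun j => ((max (hN.eigenvalues j - c) 0 : ℝ) : ℂ))
        + Matrix.diagonal (fun _ => (c:ℂ))
        - Matrix.diagonal (RCLike.ofReal ∘ hN.eigenvalues) := by
    rw [diagonal_add, diagonal_sub]
    refine congrArg Matrix.diagonal (funext fun j => ?_)
    simp only [Function.comp_apply, Pi.add_apply, Pi.sub_apply, RCLike.ofReal_alg,
      Complex.real_smul, mul_one]
    push_cast
    ring
  have hkey : U * Matrix.diagonal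
        (fun j => ((max (hN.eigenvalues j - c) 0 - (hN.eigenvalues j - c) : ℝ) : ℂ))
      * star U = posPartShift hN c + (c:ℂ) • 1 - N := by
    rw [hdiag, Matrix.mul_sub, Matrix.mul_add, Matrix.sub_mul, Matrix.add_mul]
    rw [show (U * Matrix.diagonal (RCLike.ofReal ∘ hN.eigenvalues)) * star U = N
        from (hU ▸ (hN.spectral_theorem.trans (Unitary.conjStarAlgAut_apply _ _))).symm]
    rw [show (U * Matrix.diagonal (fun _ => (c:ℂ))) * star U = (c:ℂ) • 1 from hsmul.symm]
    rw [posPartShift, ← hU]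
  rw [← hkey, star_eq_conjTranspose]
  refine Matrix.PosSemidef.mul_mul_conjTranspose_same ?_ _
  rw [posSemidef_diagonal_iff]
  intro i
  rw [Complex.zero_le_real, sub_nonneg]
  exact le_max_left _ _

lemma posPartShift_trace {N : Matrix (Fin d) (Fin d) ℂ} (hN : N.IsHermitian) (c : ℝ) :
    (posPartShift hN c).trace.re = ∑ j, max (hN.eigenvalues j - c) 0 := by
  rw [posPartShift, Matrix.trace_mul_cycle, mem_unitaryGroup_iff'.mp (hN.eigenvectorUnitary).2,
    one_mul, Matrix.trace_diagonal, Complex.re_sum]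
  simp

lemma isHermitian_real_smul_one (c : ℝ) :
    ((c:ℂ) • (1 : Matrix (Fin d) (Fin d) ℂ)).IsHermitian := by
  simp [Matrix.IsHermitian, Matrix.conjTranspose_smul, Complex.conj_ofReal]

theorem lidskii_indexed {M N : Matrix (Fin d) (Fin d) ℂ} (hM : M.IsHermitian)
    (hN : N.IsHermitian) (hMN : (M + N).IsHermitian) (J : Finset (Fin d)) :
    ∑ i ∈ J, eigDown (M + N) hMN i
      ≤ ∑ i ∈ J, eigDown M hM i
        + ∑ j ∈ Finset.univ.filter (fun j : Fin d => (j : ℕ) < J.card), eigDown N hN j := by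
  rcases Finset.eq_empty_or_nonempty J with rfl | hJne
  · simp
  have hk1 : 1 ≤ J.card := hJne.card_pos
  have hkd : J.card ≤ d := by simpa using Finset.card_le_univ J
  set k := J.card with hkdef
  set i0 : Fin d := ⟨d - k, by omega⟩ with hi0
  set c := eigUp N hN i0 with hc
  set P := posPartShift hN c with hPdef
  have hP : P.PosSemidef := posPartShift_posSemidef hN c
  have hPH : P.IsHermitian := hP.isHermitian
  have hMP : (M + P).IsHermitian := hM.add hPH
  have hone : ((c:ℂ) • (1 : Matrix (Fin d) (Fin d) ℂ)).IsHermitian := isHermitian_real_smul_one c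
  have hMPc : (M + P + (c:ℂ) • 1).IsHermitian := hMP.add hone
  have heq : (M + N) + (P + (c:ℂ) • 1 - N) = M + P + (c:ℂ) • 1 := by abel
  have hMNP : ((M + N) + (P + (c:ℂ) • 1 - N)).IsHermitian := heq ▸ hMPc
  have stepA : ∀ i : Fin d, eigDown (M + N) hMN i ≤ eigDown (M + P) hMP i + c := by
    intro i
    have e1 : eigUp (M + N) hMN i.rev ≤ eigUp ((M + N) + (P + (c:ℂ) • 1 - N)) hMNP i.rev :=
      eigUp_le_add_posSemidef hMN (posPartShift_key hN c) hMNP i.rev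
    have e2 : eigUp ((M + N) + (P + (c:ℂ) • 1 - N)) hMNP i.rev
        = eigUp (M + P + (c:ℂ) • 1) hMPc i.rev := eigUp_congr heq _ _ _
    have e3 : eigUp (M + P + (c:ℂ) • 1) hMPc i.rev = eigUp (M + P) hMP i.rev + c :=
      eigUp_add_smul_one hMP c hMPc i.rev
    simp only [eigDown]
    linarith
  have hmono : ∀ i : Fin d, eigDown M hM i ≤ eigDown (M + P) hMP i := fun i =>
    eigUp_le_add_posSemidef hM hP hMP i.rev
  have stepC : ∑ i ∈ J, (eigDown (M + P) hMP i - eigDown M hM i) ≤ P.trace.re := by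
    have h1 : ∑ i ∈ J, (eigDown (M + P) hMP i - eigDown M hM i)
        ≤ ∑ i : Fin d, (eigDown (M + P) hMP i - eigDown M hM i) :=
      Finset.sum_le_sum_of_subset_of_nonneg (Finset.subset_univ J)
        (fun i _ _ => sub_nonneg.mpr (hmono i))
    have h2 : ∑ i : Fin d, (eigDown (M + P) hMP i - eigDown M hM i) = P.trace.re := by
      rw [Finset.sum_sub_distrib, sum_eigDown, sum_eigDown, sum_eigUp, sum_eigUp,
        sum_eigenvalues_eq_retrace, sum_eigenvalues_eq_retrace, Matrix.trace_add,
        Complex.add_re]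
      ring
    linarith
  have hIci : Finset.univ.filter (fun j : Fin d => i0 ≤ j) = Finset.Ici i0 := by
    ext j; simp [Finset.mem_Ici]
  have hcardIci : (Finset.Ici i0).card = k := by
    rw [Fin.card_Ici]; simp only [hi0]; omega
  have stepD : P.trace.re = (∑ j ∈ Finset.univ.filter (fun j : Fin d => (j : ℕ) < k),
      eigDown N hN j) - k * c := by
    rw [hPdef, posPartShift_trace]
    rw [← Equiv.sum_comp (Tuple.sort hN.eigenvalues) fun j => max (hN.eigenvalues j - c) 0]
    have hmax : ∀ j : Fin d, max (eigUp N hN j - c) 0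
        = if i0 ≤ j then eigUp N hN j - c else 0 := by
      intro j
      by_cases hj : i0 ≤ j
      · rw [if_pos hj, max_eq_left (sub_nonneg.mpr (eigUp_monotone hN hj))]
      · rw [if_neg hj, max_eq_right (sub_nonpos.mpr (eigUp_monotone hN (not_le.mp hj).le))]
    have : ∑ j, max (eigUp N hN j - c) 0 = ∑ j ∈ Finset.Ici i0, (eigUp N hN j - c) := by
      rw [← hIci, Finset.sum_filter]
      exact Finset.sum_congr rfl fun j _ => hmax j
    rw [show (∑ j, max (hN.eigenvalues ((Tuple.sort hN.eigenvalues) j) - c) 0)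
        = ∑ j, max (eigUp N hN j - c) 0 from rfl, this, Finset.sum_sub_distrib,
      Finset.sum_const, hcardIci]
    have hbij : ∑ j ∈ Finset.Ici i0, eigUp N hN j
        = ∑ j ∈ Finset.univ.filter (fun j : Fin d => (j : ℕ) < k), eigDown N hN j := by
      refine Finset.sum_nbij' (fun j => j.rev) (fun j => j.rev) ?_ ?_ ?_ ?_ ?_
      · intro a ha
        simp only [Finset.mem_filter, Finset.mem_univ, true_and, Fin.val_rev]
        have := Finset.mem_Ici.mp ha
        have h2 : (i0 : ℕ) ≤ (a : ℕ) := this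
        have := a.isLt
        simp only [hi0] at h2
        omega
      · intro a ha
        simp only [Finset.mem_filter, Finset.mem_univ, true_and] at ha
        rw [Finset.mem_Ici]
        have := a.isLt
        rw [Fin.le_def, Fin.val_rev]
        simp only [hi0]
        omega
      · intro a _; exact Fin.rev_rev a
      · intro a _; exact Fin.rev_rev a
      · intro a _
        simp only [eigDown, Fin.rev_rev]
    rw [hbij]
    push_cast
    ring
  calc ∑ i ∈ J, eigDown (M + N) hMN i
      ≤ ∑ i ∈ J, (eigDown (M + P) hMP i + c) := Finset.sum_le_sum fun i _ => stepA i
    _ = ∑ i ∈ J, eigDown M hM i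
        + (∑ i ∈ J, (eigDown (M + P) hMP i - eigDown M hM i)) + k * c := by
      rw [Finset.sum_add_distrib, Finset.sum_const, Finset.sum_sub_distrib]
      push_cast
      ring
    _ ≤ ∑ i ∈ J, eigDown M hM i + P.trace.re + k * c := by linarith
    _ = ∑ i ∈ J, eigDown M hM i
        + ∑ j ∈ Finset.univ.filter (fun j : Fin d => (j : ℕ) < k), eigDown N hN j := by
      rw [stepD]; ring

theorem lidskii_subset (A B : Matrix (Fin d) (Fin d) ℂ) (hA : A.IsHermitian)
    (hB : B.IsHermitian) (J : Finset (Fin d)) :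
    ∑ i ∈ J, (eigDown A hA i + eigUp B hB i)
      ≤ ∑ j ∈ Finset.univ.filter (fun j : Fin d => (j : ℕ) < J.card),
          eigDown (A + B) (hA.add hB) j := by
  have hnB : (-B).IsHermitian := hB.neg
  have hAB : (A + B).IsHermitian := hA.add hB
  have heq : (-B) + (A + B) = A := by abel
  have hH : ((-B) + (A + B)).IsHermitian := by rw [heq]; exact hA
  have h := lidskii_indexed hnB hAB hH J
  have e1 : ∀ i : Fin d, eigDown ((-B) + (A + B)) hH i = eigDown A hA i := fun i =>
    eigUp_congr heq _ _ i.rev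
  have e2 : ∀ i : Fin d, eigDown (-B) hnB i = - eigUp B hB i := by
    intro i
    show eigUp (-B) hnB i.rev = _
    rw [eigUp_neg hB hnB i.rev, Fin.rev_rev]
  rw [Finset.sum_congr rfl (fun i _ => e1 i), Finset.sum_congr rfl (fun i _ => e2 i)] at h
  rw [Finset.sum_add_distrib]
  have : ∑ i ∈ J, -eigUp B hB i = - ∑ i ∈ J, eigUp B hB i := Finset.sum_neg_distrib _
  rw [this] at h
  linarith

lemma card_filter_lt (k : ℕ) :
    (Finset.univ.filter (fun j : Fin d => (j : ℕ) < k)).card = min k d := by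
  rcases le_or_gt d k with h | h
  · have he : Finset.univ.filter (fun j : Fin d => (j : ℕ) < k) = Finset.univ := by
      ext j
      simp only [Finset.mem_filter, Finset.mem_univ, true_and, iff_true]
      have := j.isLt; omega
    rw [he, Finset.card_univ, Fintype.card_fin]; omega
  · have he : Finset.univ.filter (fun j : Fin d => (j : ℕ) < k)
        = Finset.Iio (⟨k, h⟩ : Fin d) := by
      ext j
      simp [Fin.lt_def]
    rw [he, Fin.card_Iio]
    simp only [Fin.val_mk]
    omega

theorem lidskii' (A B : Matrix (Fin d) (Fin d) ℂ)
    (hA : A.IsHermitian) (hB : B.IsHermitian) :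
    Majorizes ((hA.add hB).eigenvalues) (fun j => eigDown A hA j + eigUp B hB j) := by
  constructor
  · intro k
    set v : Fin d → ℝ := fun j => eigDown A hA j + eigUp B hB j with hv
    set F := Finset.univ.filter (fun j : Fin d => (j : ℕ) < k) with hF
    have hinjF : ∀ x ∈ F, ∀ y ∈ F, Tuple.sort v x.rev = Tuple.sort v y.rev → x = y :=
      fun x _ y _ h => Fin.rev_injective ((Tuple.sort v).injective h)
    set J := F.image (fun j => Tuple.sort v j.rev) with hJ
    have hJcard : J.card = F.card := Finset.card_image_of_injOn hinjF
    have hsum1 : ∑ j ∈ F, sortDown v j = ∑ i ∈ J, v i := by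
      rw [hJ, Finset.sum_image hinjF]
      rfl
    have hsub := lidskii_subset A B hA hB J
    have hFcard : F.card = min k d := card_filter_lt k
    have hfilterEq : Finset.univ.filter (fun j : Fin d => (j : ℕ) < J.card) = F := by
      rw [hJcard, hFcard, hF]
      ext j
      simp only [Finset.mem_filter, Finset.mem_univ, true_and]
      have := j.isLt; omega
    rw [hfilterEq] at hsub
    have hre : ∀ j ∈ F, eigDown (A + B) (hA.add hB) j
        = sortDown ((hA.add hB).eigenvalues) j := fun j _ => rfl
    rw [Finset.sum_congr rfl hre] at hsub
    rw [hsum1]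
    exact hsub
  · have h1 : ∑ j, (eigDown A hA j + eigUp B hB j) = A.trace.re + B.trace.re := by
      rw [Finset.sum_add_distrib, sum_eigDown, sum_eigUp, sum_eigUp,
        sum_eigenvalues_eq_retrace, sum_eigenvalues_eq_retrace]
    have h2 : ∑ j, (hA.add hB).eigenvalues j = A.trace.re + B.trace.re := by
      rw [sum_eigenvalues_eq_retrace (hA.add hB), Matrix.trace_add, Complex.add_re]
    rw [h2, ← h1]

/-- Lidskii: `λ^↓(A) + λ^↑(B)` is majorized by the eigenvalue vector of `A + B`. -/
theorem lidskii {d : ℕ} (A B : Matrix (Fin d) (Fin d) ℂ)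
    (hA : A.IsHermitian) (hB : B.IsHermitian) :
    Majorizes ((hA.add hB).eigenvalues) (fun j => eigDown A hA j + eigUp B hB j) :=
  lidskii' A B hA hB
end
end

section
/- The Audenaert–Fannes inequality follows from the fundamental entropic inequality: if ρ₁, ρ₂ are density matrices on ℂ^d with (1/2)‖ρ₁ − ρ₂‖₁ = ε ∈ (0,1), then |S(ρ₁) − S(ρ₂)| ≤ ε log(d − 1) + h(ε). -/
open Matrix BigOperators
open scoped ComplexOrder

noncomputable section

/-! ### Auxiliary lemmas for the proof -/


lemma eta_eq_negMulLog : eta = Real.negMulLog := by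
  funext x; rw [eta, Real.negMulLog]; ring

lemma eta_nonneg {x : ℝ} (h0 : 0 ≤ x) (h1 : x ≤ 1) : 0 ≤ eta x := by
  rw [eta_eq_negMulLog]; exact Real.negMulLog_nonneg h0 h1

lemma eta_zero : eta 0 = 0 := by simp [eta]

lemma binEnt_eq (x : ℝ) : binEnt x = eta x + eta (1 - x) := by
  simp [binEnt, eta]; ring

lemma binEnt_symm (x : ℝ) : binEnt (1 - x) = binEnt x := by
  rw [binEnt_eq, binEnt_eq]; ring_nf

lemma binEnt_nonneg {x : ℝ} (h0 : 0 ≤ x) (h1 : x ≤ 1) : 0 ≤ binEnt x := by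
  rw [binEnt_eq]
  have := eta_nonneg h0 h1
  have := eta_nonneg (by linarith : (0:ℝ) ≤ 1 - x) (by linarith)
  linarith

lemma eta_subadd {x y : ℝ} (hx : 0 ≤ x) (hy : 0 ≤ y) : eta (x + y) ≤ eta x + eta y := by
  rcases eq_or_lt_of_le hx with h | hx'
  · simp [← h, eta_zero]
  rcases eq_or_lt_of_le hy with h | hy'
  · simp [← h, eta_zero]
  have hxy : (0:ℝ) < x + y := by linarith
  have l1 : Real.log x ≤ Real.log (x + y) := Real.log_le_log hx' (by linarith)
  have l2 : Real.log y ≤ Real.log (x + y) := Real.log_le_log hy' (by linarith)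
  have : (x + y) * Real.log (x + y) = x * Real.log (x+y) + y * Real.log (x+y) := by ring
  simp only [eta]
  nlinarith [mul_le_mul_of_nonneg_left l1 hx, mul_le_mul_of_nonneg_left l2 hy]

/-- Jensen closed form: sum of eta over a finset is at most `eta T + T log |s|`. -/
lemma sum_eta_le {ι : Type*} (s : Finset ι) (v : ι → ℝ) (hv : ∀ i ∈ s, 0 ≤ v i) :
    ∑ i ∈ s, eta (v i) ≤ eta (∑ i ∈ s, v i) + (∑ i ∈ s, v i) * Real.log s.card := by
  rcases s.eq_empty_or_nonempty with rfl | hne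
  · simp [eta_zero]
  have hcard : (0:ℝ) < s.card := by exact_mod_cast Finset.card_pos.mpr hne
  set T := ∑ i ∈ s, v i with hT
  have hT0 : 0 ≤ T := Finset.sum_nonneg hv
  rcases eq_or_lt_of_le hT0 with h | hTpos
  · -- T = 0 : all terms are zero
    have hz : ∀ i ∈ s, v i = 0 := by
      intro i hi
      have := (Finset.sum_eq_zero_iff_of_nonneg hv).mp h.symm
      exact this i hi
    have : ∑ i ∈ s, eta (v i) = 0 := Finset.sum_eq_zero (fun i hi => by rw [hz i hi, eta_zero])
    rw [this, ← h, eta_zero]; simp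
  · -- Jensen with uniform weights
    have hjen := Real.concaveOn_negMulLog.le_map_sum (t := s) (w := fun _ => (s.card : ℝ)⁻¹)
      (p := v) (fun i _ => by positivity)
      (by rw [Finset.sum_const, nsmul_eq_mul]; field_simp)
      (fun i hi => Set.mem_Ici.mpr (hv i hi))
    simp only [smul_eq_mul] at hjen
    have hsum1 : ∑ i ∈ s, (s.card : ℝ)⁻¹ * Real.negMulLog (v i)
        = (s.card : ℝ)⁻¹ * ∑ i ∈ s, Real.negMulLog (v i) := by
      rw [Finset.mul_sum]
    have hsum2 : ∑ i ∈ s, (s.card : ℝ)⁻¹ * v i = (s.card : ℝ)⁻¹ * T := by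
      rw [← Finset.mul_sum]
    rw [hsum1, hsum2] at hjen
    have hval : Real.negMulLog ((s.card : ℝ)⁻¹ * T)
        = (s.card : ℝ)⁻¹ * (eta T + T * Real.log s.card) := by
      rw [Real.negMulLog, Real.log_mul (by positivity) (ne_of_gt hTpos), Real.log_inv, eta]
      ring
    rw [hval] at hjen
    rw [eta_eq_negMulLog] at hjen ⊢
    exact le_of_mul_le_mul_left hjen (show (0:ℝ) < (s.card : ℝ)⁻¹ by positivity)

/-- concavity step : `eta (m + s) ≥ eta m + m log (1-δ)` when `0 ≤ s ≤ δ < 1`. -/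
lemma eta_add_ge {m s δ : ℝ} (hm : 0 ≤ m) (hs : 0 ≤ s) (hsδ : s ≤ δ) (hδ0 : 0 < δ)
    (hδ1 : δ < 1) : eta m + m * Real.log (1 - δ) ≤ eta (m + s) := by
  have h1δ : (0:ℝ) < 1 - δ := by linarith
  have hcc := Real.concaveOn_negMulLog.2 (Set.mem_Ici.mpr (show 0 ≤ m / (1-δ) by positivity))
    (Set.mem_Ici.mpr (show 0 ≤ s / δ by positivity))
    (le_of_lt h1δ) (le_of_lt hδ0) (by ring)
  simp only [smul_eq_mul] at hcc
  have hx : (1 - δ) * (m / (1-δ)) + δ * (s / δ) = m + s := by field_simp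
  rw [hx] at hcc
  have e1 : (1 - δ) * Real.negMulLog (m / (1-δ)) = eta m + m * Real.log (1 - δ) := by
    rcases eq_or_lt_of_le hm with h | hm'
    · simp [← h, Real.negMulLog, eta_zero]
    · rw [Real.negMulLog, Real.log_div (ne_of_gt hm') (ne_of_gt h1δ), eta]
      field_simp; ring
  have e2 : 0 ≤ δ * Real.negMulLog (s / δ) := by
    apply mul_nonneg (le_of_lt hδ0)
    apply Real.negMulLog_nonneg (by positivity)
    rw [div_le_one hδ0]; exact hsδ
  rw [show eta (m+s) = Real.negMulLog (m+s) by rw [eta_eq_negMulLog]]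
  calc eta m + m * Real.log (1-δ) = (1-δ) * Real.negMulLog (m / (1-δ)) := e1.symm
    _ ≤ (1-δ) * Real.negMulLog (m / (1-δ)) + δ * Real.negMulLog (s / δ) := by linarith
    _ ≤ Real.negMulLog (m + s) := hcc



lemma binEnt_eq' : binEnt = fun x => Real.negMulLog x + Real.negMulLog (1 - x) := by
  funext x; rw [binEnt, Real.negMulLog, Real.negMulLog]; ring

lemma continuous_binEnt : Continuous binEnt := by
  rw [binEnt_eq']
  exact (Real.continuous_negMulLog).add (Real.continuous_negMulLog.comp (continuous_const.sub continuous_id))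

lemma hasDerivAt_binEnt {x : ℝ} (h0 : x ≠ 0) (h1 : x ≠ 1) :
    HasDerivAt binEnt (Real.log (1 - x) - Real.log x) x := by
  have h1' : (1:ℝ) - x ≠ 0 := fun h => h1 (by linarith [h])
  have d1 := Real.hasDerivAt_negMulLog h0
  have d2 : HasDerivAt (fun y : ℝ => 1 - y) (-1) x := by
    simpa using (hasDerivAt_id x).const_sub 1
  have d3 := (Real.hasDerivAt_negMulLog h1').comp x d2
  have := d1.add d3
  rw [binEnt_eq']
  convert this using 1
  · rfl
  · rfl
  · rfl
  ring

/-- monotonicity of `x ↦ binEnt x + x * L` on `[0, c]` when `log ((1-c)/c) + L ≥ 0`-ish.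
    We state it for `c ≤ (d-1)/d`, `L = log (d-1)`. -/
lemma mono_g {L c : ℝ} (hc0 : 0 < c) (hc1 : c < 1)
    (hkey : ∀ x ∈ Set.Ioo (0:ℝ) c, 0 ≤ Real.log (1 - x) - Real.log x + L) :
    MonotoneOn (fun x => binEnt x + x * L) (Set.Icc 0 c) := by
  apply monotoneOn_of_deriv_nonneg (convex_Icc 0 c)
  · exact (continuous_binEnt.add (continuous_id.mul continuous_const)).continuousOn
  · intro x hx
    rw [interior_Icc] at hx
    have h0 : x ≠ 0 := ne_of_gt hx.1
    have h1 : x ≠ 1 := ne_of_lt (lt_of_lt_of_le hx.2 (le_of_lt hc1))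
    exact ((hasDerivAt_binEnt h0 h1).add ((hasDerivAt_id x).mul_const L)).differentiableAt.differentiableWithinAt
  · intro x hx
    rw [interior_Icc] at hx
    have h0 : x ≠ 0 := ne_of_gt hx.1
    have h1 : x ≠ 1 := ne_of_lt (lt_of_lt_of_le hx.2 (le_of_lt hc1))
    have hd : HasDerivAt (fun x => binEnt x + x * L) (Real.log (1 - x) - Real.log x + 1 * L) x := by
      exact (hasDerivAt_binEnt h0 h1).add ((hasDerivAt_id x).mul_const L)
    rw [hd.deriv]
    have := hkey x hx
    linarith

/-- monotonicity of `x ↦ binEnt x + (1-x) * L` on `[0, c]` when log((1-x)/x) ≥ L on (0,c). -/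
lemma mono_phi {L c : ℝ} (hc0 : 0 < c) (hc1 : c < 1)
    (hkey : ∀ x ∈ Set.Ioo (0:ℝ) c, 0 ≤ Real.log (1 - x) - Real.log x - L) :
    MonotoneOn (fun x => binEnt x + (1 - x) * L) (Set.Icc 0 c) := by
  apply monotoneOn_of_deriv_nonneg (convex_Icc 0 c)
  · exact (continuous_binEnt.add ((continuous_const.sub continuous_id).mul continuous_const)).continuousOn
  · intro x hx
    rw [interior_Icc] at hx
    have h0 : x ≠ 0 := ne_of_gt hx.1
    have h1 : x ≠ 1 := ne_of_lt (lt_of_lt_of_le hx.2 (le_of_lt hc1))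
    have d2 : HasDerivAt (fun y : ℝ => (1 - y) * L) (-L) x := by
      simpa using ((hasDerivAt_id x).const_sub 1).mul_const L
    exact ((hasDerivAt_binEnt h0 h1).add d2).differentiableAt.differentiableWithinAt
  · intro x hx
    rw [interior_Icc] at hx
    have h0 : x ≠ 0 := ne_of_gt hx.1
    have h1 : x ≠ 1 := ne_of_lt (lt_of_lt_of_le hx.2 (le_of_lt hc1))
    have d2 : HasDerivAt (fun y : ℝ => (1 - y) * L) (-L) x := by
      simpa using ((hasDerivAt_id x).const_sub 1).mul_const L
    have hd := (hasDerivAt_binEnt h0 h1).add d2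
    rw [show deriv (fun x => binEnt x + (1 - x) * L) x = _ from hd.deriv]
    have := hkey x hx
    simpa using this


section Mat
variable {d : ℕ}


/-- Workhorse: diagonal entries of `star U * A * U` are doubly-stochastic averages of eigenvalues. -/
lemma diag_weights {A : Matrix (Fin d) (Fin d) ℂ} (hA : A.IsHermitian)
    (U : Matrix (Fin d) (Fin d) ℂ) (hU : U ∈ Matrix.unitaryGroup (Fin d) ℂ) :
    ∃ w : Fin d → Fin d → ℝ, (∀ j i, 0 ≤ w j i) ∧ (∀ i, ∑ j, w j i = 1) ∧
      (∀ j, ∑ i, w j i = 1) ∧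
      (∀ i, ((star U * A * U) i i).re = ∑ j, hA.eigenvalues j * w j i) := by
  classical
  set W : Matrix (Fin d) (Fin d) ℂ := (hA.eigenvectorUnitary : Matrix (Fin d) (Fin d) ℂ) with hW
  have hWU : W ∈ Matrix.unitaryGroup (Fin d) ℂ := hA.eigenvectorUnitary.2
  set C : Matrix (Fin d) (Fin d) ℂ := star W * U with hC
  have hWW : W * star W = 1 := (Matrix.mem_unitaryGroup_iff).mp hWU
  have hWW' : star W * W = 1 := (Matrix.mem_unitaryGroup_iff').mp hWU
  have hUU : U * star U = 1 := (Matrix.mem_unitaryGroup_iff).mp hU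
  have hUU' : star U * U = 1 := (Matrix.mem_unitaryGroup_iff').mp hU
  have hC1 : star C * C = 1 := by
    rw [hC, StarMul.star_mul, star_star]
    calc star U * W * (star W * U) = star U * (W * star W) * U := by
          simp only [Matrix.mul_assoc]
      _ = 1 := by rw [hWW, Matrix.mul_one, hUU']
  have hC2 : C * star C = 1 := by
    rw [hC, StarMul.star_mul, star_star]
    calc star W * U * (star U * W) = star W * (U * star U) * W := by
          simp only [Matrix.mul_assoc]
      _ = 1 := by rw [hUU, Matrix.mul_one, hWW']
  refine ⟨fun j i => Complex.normSq (C j i), fun j i => Complex.normSq_nonneg _, ?_, ?_, ?_⟩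
  · intro i
    have h1 : ((star C * C) i i) = ∑ j, star (C j i) * C j i := by
      rw [Matrix.mul_apply]
      exact Finset.sum_congr rfl fun j _ => by rw [Matrix.star_apply]
    have h2 : ((star C * C) i i) = 1 := by rw [hC1, Matrix.one_apply_eq]
    have h3 : ∑ j, star (C j i) * C j i = ∑ j, (Complex.normSq (C j i) : ℂ) := by
      refine Finset.sum_congr rfl fun j _ => ?_
      rw [Complex.normSq_eq_conj_mul_self]; rfl
    have : (∑ j, (Complex.normSq (C j i) : ℂ)) = 1 := by rw [← h3, ← h1, h2]
    have := congrArg Complex.re this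
    rw [Complex.re_sum] at this
    simpa using this
  · intro j
    have h1 : ((C * star C) j j) = ∑ i, C j i * star (C j i) := by
      rw [Matrix.mul_apply]
      exact Finset.sum_congr rfl fun i _ => by rw [Matrix.star_apply]
    have h2 : ((C * star C) j j) = 1 := by rw [hC2, Matrix.one_apply_eq]
    have h3 : ∑ i, C j i * star (C j i) = ∑ i, (Complex.normSq (C j i) : ℂ) := by
      refine Finset.sum_congr rfl fun i _ => ?_
      rw [show star (C j i) = (starRingEnd ℂ) (C j i) from rfl, Complex.mul_conj]
    have : (∑ i, (Complex.normSq (C j i) : ℂ)) = 1 := by rw [← h3, ← h1, h2]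
    have := congrArg Complex.re this
    rw [Complex.re_sum] at this
    simpa using this
  · intro i
    have hspec : A = W * Matrix.diagonal (RCLike.ofReal ∘ hA.eigenvalues) * star W :=
      hA.spectral_theorem
    have key : star U * A * U = star C * Matrix.diagonal (RCLike.ofReal ∘ hA.eigenvalues) * C := by
      rw [hC, StarMul.star_mul, star_star]
      conv_lhs => rw [hspec]
      simp only [Matrix.mul_assoc]
    rw [key]
    have hentry : ((star C * Matrix.diagonal (RCLike.ofReal ∘ hA.eigenvalues) * C :
          Matrix (Fin d) (Fin d) ℂ)) i i
        = ∑ j, star (C j i) * ((hA.eigenvalues j : ℂ) * C j i) := by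
      rw [Matrix.mul_assoc, Matrix.mul_apply]
      refine Finset.sum_congr rfl fun j _ => ?_
      rw [Matrix.star_apply, Matrix.diagonal_mul]
      rfl
    rw [hentry, Complex.re_sum]
    refine Finset.sum_congr rfl fun j _ => ?_
    have : star (C j i) * ((hA.eigenvalues j : ℂ) * C j i)
        = (hA.eigenvalues j : ℂ) * (Complex.normSq (C j i) : ℂ) := by
      rw [Complex.normSq_eq_conj_mul_self,
        show star (C j i) = (starRingEnd ℂ) (C j i) from rfl]
      ring
    rw [this, ← Complex.ofReal_mul]
    simp

/-- trace of a Hermitian matrix equals the (complex-coerced) sum of its eigenvalues. -/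
lemma trace_eq_sum_eigs {A : Matrix (Fin d) (Fin d) ℂ} (hA : A.IsHermitian) :
    A.trace = ∑ i, (hA.eigenvalues i : ℂ) := by
  conv_lhs => rw [hA.spectral_theorem, Unitary.conjStarAlgAut_apply]
  rw [Matrix.trace_mul_cycle]
  rw [(Matrix.mem_unitaryGroup_iff').mp hA.eigenvectorUnitary.2, Matrix.one_mul,
    Matrix.trace_diagonal]
  rfl


/-- ABS consumer : `∑ i |diag_i(U* A U)| ≤ ∑ |eigenvalues|`. -/
lemma sum_abs_diag_le {A : Matrix (Fin d) (Fin d) ℂ} (hA : A.IsHermitian)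
    (U : Matrix (Fin d) (Fin d) ℂ) (hU : U ∈ Matrix.unitaryGroup (Fin d) ℂ) :
    ∑ i, |((star U * A * U) i i).re| ≤ ∑ j, |hA.eigenvalues j| := by
  obtain ⟨w, hw0, hwc, hwr, hdiag⟩ := diag_weights hA U hU
  calc ∑ i, |((star U * A * U) i i).re| = ∑ i, |∑ j, hA.eigenvalues j * w j i| := by
        exact Finset.sum_congr rfl fun i _ => by rw [hdiag i]
    _ ≤ ∑ i, ∑ j, |hA.eigenvalues j| * w j i := by
        refine Finset.sum_le_sum fun i _ => ?_
        refine (Finset.abs_sum_le_sum_abs _ _).trans ?_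
        refine Finset.sum_le_sum fun j _ => ?_
        rw [abs_mul, abs_of_nonneg (hw0 j i)]
    _ = ∑ j, |hA.eigenvalues j| * ∑ i, w j i := by
        rw [Finset.sum_comm]
        exact Finset.sum_congr rfl fun j _ => by rw [Finset.mul_sum]
    _ = ∑ j, |hA.eigenvalues j| := by
        exact Finset.sum_congr rfl fun j _ => by rw [hwr j, mul_one]

/-- JENSEN consumer : pinching increases entropy. -/
lemma sum_eta_diag_ge {A : Matrix (Fin d) (Fin d) ℂ} (hA : A.IsHermitian)
    (hpos : ∀ j, 0 ≤ hA.eigenvalues j)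
    (U : Matrix (Fin d) (Fin d) ℂ) (hU : U ∈ Matrix.unitaryGroup (Fin d) ℂ) :
    ∑ j, eta (hA.eigenvalues j) ≤ ∑ i, eta (((star U * A * U) i i).re) := by
  obtain ⟨w, hw0, hwc, hwr, hdiag⟩ := diag_weights hA U hU
  have step1 : ∀ i, ∑ j, w j i * eta (hA.eigenvalues j) ≤ eta (((star U * A * U) i i).re) := by
    intro i
    rw [hdiag i, eta_eq_negMulLog]
    have := Real.concaveOn_negMulLog.le_map_sum (t := Finset.univ) (w := fun j => w j i)
      (p := fun j => hA.eigenvalues j) (fun j _ => hw0 j i) (hwc i)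
      (fun j _ => Set.mem_Ici.mpr (hpos j))
    simp only [smul_eq_mul] at this
    calc ∑ j, w j i * Real.negMulLog (hA.eigenvalues j) ≤
          Real.negMulLog (∑ j, w j i * hA.eigenvalues j) := this
      _ = Real.negMulLog (∑ j, hA.eigenvalues j * w j i) := by
          congr 1; exact Finset.sum_congr rfl fun j _ => mul_comm _ _
  calc ∑ j, eta (hA.eigenvalues j) = ∑ j, (∑ i, w j i) * eta (hA.eigenvalues j) := by
        exact Finset.sum_congr rfl fun j _ => by rw [hwr j, one_mul]
    _ = ∑ i, ∑ j, w j i * eta (hA.eigenvalues j) := by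
        rw [Finset.sum_comm]
        exact Finset.sum_congr rfl fun j _ => by rw [Finset.sum_mul]
    _ ≤ ∑ i, eta (((star U * A * U) i i).re) := Finset.sum_le_sum fun i _ => step1 i

/-- MIN consumer : each diagonal entry is at least the least eigenvalue bound. -/
lemma diag_ge_min {A : Matrix (Fin d) (Fin d) ℂ} (hA : A.IsHermitian) (c : ℝ)
    (hc : ∀ j, c ≤ hA.eigenvalues j)
    (U : Matrix (Fin d) (Fin d) ℂ) (hU : U ∈ Matrix.unitaryGroup (Fin d) ℂ) (i : Fin d) :
    c ≤ ((star U * A * U) i i).re := by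
  obtain ⟨w, hw0, hwc, hwr, hdiag⟩ := diag_weights hA U hU
  rw [hdiag i]
  calc c = ∑ j, c * w j i := by
        rw [← Finset.mul_sum, hwc i, mul_one]
    _ ≤ ∑ j, hA.eigenvalues j * w j i :=
        Finset.sum_le_sum fun j _ => mul_le_mul_of_nonneg_right (hc j) (hw0 j i)

/-- diagonal entries sum : `∑ i diag_i(U* A U) = trace` (real part). -/
lemma sum_diag_re {A : Matrix (Fin d) (Fin d) ℂ} (hA : A.IsHermitian)
    (U : Matrix (Fin d) (Fin d) ℂ) (hU : U ∈ Matrix.unitaryGroup (Fin d) ℂ) :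
    ∑ i, ((star U * A * U) i i).re = ∑ j, hA.eigenvalues j := by
  obtain ⟨w, hw0, hwc, hwr, hdiag⟩ := diag_weights hA U hU
  calc ∑ i, ((star U * A * U) i i).re = ∑ i, ∑ j, hA.eigenvalues j * w j i :=
        Finset.sum_congr rfl fun i _ => hdiag i
    _ = ∑ j, hA.eigenvalues j * ∑ i, w j i := by
        rw [Finset.sum_comm]
        exact Finset.sum_congr rfl fun j _ => by rw [Finset.mul_sum]
    _ = ∑ j, hA.eigenvalues j := Finset.sum_congr rfl fun j _ => by rw [hwr j, mul_one]


end Mat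


section Classical
variable {d : ℕ}

lemma log_dm1_nonneg (hd : 2 ≤ d) : 0 ≤ Real.log ((d:ℝ) - 1) := by
  apply Real.log_nonneg
  have : (2:ℝ) ≤ (d:ℝ) := by exact_mod_cast hd
  linarith

set_option maxHeartbeats 1000000 in
/-- classical tight continuity bound, one-sided (case ε ≤ 1 - 1/d). -/
lemma classical_small {ε : ℝ} (hd : 2 ≤ d) (p q : Fin d → ℝ)
    (hp0 : ∀ i, 0 ≤ p i) (hq0 : ∀ i, 0 ≤ q i)
    (hp1 : ∑ i, p i = 1) (hq1 : ∑ i, q i = 1)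
    (hδε : ∑ i, max (p i - q i) 0 ≤ ε)
    (hε0 : 0 < ε) (hεc : ε ≤ 1 - (d:ℝ)⁻¹) :
    ∑ i, eta (p i) - ∑ i, eta (q i) ≤ ε * Real.log ((d:ℝ) - 1) + binEnt ε := by
  have hdR : (2:ℝ) ≤ (d:ℝ) := by exact_mod_cast hd
  have hL : 0 ≤ Real.log ((d:ℝ) - 1) := log_dm1_nonneg hd
  set L := Real.log ((d:ℝ) - 1) with hLdef
  set δ := ∑ i, max (p i - q i) 0 with hδdef
  have hδ0 : 0 ≤ δ := Finset.sum_nonneg fun i _ => le_max_right _ _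
  have hδδ' : δ = ∑ i, max (q i - p i) 0 := by
    have : ∀ i : Fin d, max (p i - q i) 0 - max (q i - p i) 0 = p i - q i := by
      intro i; rcases le_total (p i) (q i) with h | h
      · rw [max_eq_right (by linarith), max_eq_left (by linarith)]; ring
      · rw [max_eq_left (by linarith), max_eq_right (by linarith)]; ring
    have hsum : ∑ i, (max (p i - q i) 0 - max (q i - p i) 0) = 0 := by
      calc ∑ i, (max (p i - q i) 0 - max (q i - p i) 0) = ∑ i, (p i - q i) :=
            Finset.sum_congr rfl fun i _ => this i
        _ = 0 := by rw [Finset.sum_sub_distrib, hp1, hq1]; ring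
    rw [Finset.sum_sub_distrib] at hsum
    linarith [hsum]
  -- decomposition
  set m := fun i => min (p i) (q i) with hmdef
  have hm0 : ∀ i, 0 ≤ m i := fun i => le_min (hp0 i) (hq0 i)
  have hrm : ∀ i, p i = m i + max (p i - q i) 0 := by
    intro i; rcases le_total (p i) (q i) with h | h
    · rw [hmdef]; simp [min_eq_left h, max_eq_right (by linarith : p i - q i ≤ 0)]
    · rw [hmdef]; simp [min_eq_right h, max_eq_left (by linarith : (0:ℝ) ≤ p i - q i)]
  have hsm : ∀ i, q i = m i + max (q i - p i) 0 := by
    intro i; rcases le_total (p i) (q i) with h | h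
    · rw [hmdef]; simp [min_eq_left h, max_eq_left (by linarith : (0:ℝ) ≤ q i - p i)]
    · rw [hmdef]; simp [min_eq_right h, max_eq_right (by linarith : q i - p i ≤ 0)]
  have hmsum : ∑ i, m i = 1 - δ := by
    have : ∑ i, p i = ∑ i, m i + ∑ i, max (p i - q i) 0 := by
      rw [← Finset.sum_add_distrib]
      exact Finset.sum_congr rfl fun i _ => hrm i
    rw [hp1] at this; rw [hδdef]; linarith
  rcases eq_or_lt_of_le hδ0 with hzero | hδpos
  · -- δ = 0 : p = q
    have hpq : ∀ i, p i = q i := by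
      intro i
      have h1 : max (p i - q i) 0 = 0 := by
        have := Finset.sum_eq_zero_iff_of_nonneg
          (fun i (_ : i ∈ Finset.univ) => le_max_right (p i - q i) 0) |>.mp hzero.symm
        exact this i (Finset.mem_univ i)
      have h2 : max (q i - p i) 0 = 0 := by
        have hz2 : (0:ℝ) = ∑ i, max (q i - p i) 0 := by rw [← hδδ']; exact hzero
        have := Finset.sum_eq_zero_iff_of_nonneg
          (fun i (_ : i ∈ Finset.univ) => le_max_right (q i - p i) 0) |>.mp hz2.symm
        exact this i (Finset.mem_univ i)
      have := hrm i; have := hsm i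
      rcases le_total (p i) (q i) with h | h <;> nlinarith [le_max_left (p i - q i) (0:ℝ), le_max_left (q i - p i) (0:ℝ)]
    have : ∑ i, eta (p i) = ∑ i, eta (q i) :=
      Finset.sum_congr rfl fun i _ => by rw [hpq i]
    rw [this]
    have hb : 0 ≤ binEnt ε := binEnt_nonneg (le_of_lt hε0) (by nlinarith [inv_pos.mpr (show (0:ℝ) < d by linarith)])
    nlinarith [mul_nonneg (le_of_lt hε0) hL]
  · -- δ > 0
    have hδ1 : δ < 1 := by
      have hc1 : (d:ℝ)⁻¹ > 0 := inv_pos.mpr (by linarith)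
      linarith [hδε]
    -- upper bound for H p
    have hup : ∑ i, eta (p i) ≤ ∑ i, eta (m i) + ∑ i, eta (max (p i - q i) 0) := by
      rw [← Finset.sum_add_distrib]
      refine Finset.sum_le_sum fun i _ => ?_
      conv_lhs => rw [hrm i]
      exact eta_subadd (hm0 i) (le_max_right _ _)
    -- the positive part is supported away from some i₁
    have hex : ∃ i₁ : Fin d, 0 < max (q i₁ - p i₁) 0 := by
      by_contra hno
      push_neg at hno
      have : ∑ i, max (q i - p i) 0 ≤ 0 :=
        Finset.sum_nonpos fun i _ => hno i
      rw [← hδδ'] at this; linarith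
    obtain ⟨i₁, hi₁⟩ := hex
    have hri₁ : max (p i₁ - q i₁) 0 = 0 := by
      have : p i₁ < q i₁ := by
        by_contra hcon; push_neg at hcon
        rw [max_eq_right (by linarith)] at hi₁; linarith
      rw [max_eq_right (by linarith)]
    have hrsum : ∑ i ∈ Finset.univ.erase i₁, max (p i - q i) 0 = δ := by
      rw [hδdef]
      exact Finset.sum_erase _ hri₁
    have hrcard : ((Finset.univ.erase i₁ : Finset (Fin d)).card : ℝ) = (d:ℝ) - 1 := by
      rw [Finset.card_erase_of_mem (Finset.mem_univ i₁), Finset.card_univ, Fintype.card_fin]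
      have : 1 ≤ d := le_trans (by norm_num) hd
      push_cast [Nat.cast_sub this]
      ring
    have hetar : ∑ i, eta (max (p i - q i) 0) ≤ eta δ + δ * L := by
      have h1 : ∑ i, eta (max (p i - q i) 0) = ∑ i ∈ Finset.univ.erase i₁, eta (max (p i - q i) 0) := by
        exact (Finset.sum_erase _ (by rw [hri₁, eta_zero])).symm
      rw [h1]
      have h2 := sum_eta_le (Finset.univ.erase i₁) (fun i => max (p i - q i) 0)
        (fun i _ => le_max_right _ _)
      rw [hrsum, hrcard] at h2
      exact h2
    -- lower bound for H q
    have hlow : ∑ i, eta (m i) + (1 - δ) * Real.log (1 - δ) ≤ ∑ i, eta (q i) := by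
      have per : ∀ i, eta (m i) + m i * Real.log (1 - δ) ≤ eta (q i) := by
        intro i
        rw [hsm i]
        refine eta_add_ge (hm0 i) (le_max_right _ _) ?_ hδpos hδ1
        rw [hδδ']
        exact Finset.single_le_sum (f := fun i => max (q i - p i) 0)
          (fun i _ => le_max_right _ _) (Finset.mem_univ i)
      calc ∑ i, eta (m i) + (1 - δ) * Real.log (1 - δ)
          = ∑ i, (eta (m i) + m i * Real.log (1 - δ)) := by
            rw [Finset.sum_add_distrib, ← Finset.sum_mul, hmsum]
        _ ≤ ∑ i, eta (q i) := Finset.sum_le_sum fun i _ => per i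
    -- combine
    have hcomb : ∑ i, eta (p i) - ∑ i, eta (q i) ≤ binEnt δ + δ * L := by
      have e1 : binEnt δ = eta δ + eta (1 - δ) := binEnt_eq δ
      have e2 : eta (1 - δ) = -((1-δ) * Real.log (1-δ)) := rfl
      nlinarith [hup, hetar, hlow]
    -- monotonicity
    have hkey : ∀ x ∈ Set.Ioo (0:ℝ) (1 - (d:ℝ)⁻¹), 0 ≤ Real.log (1 - x) - Real.log x + L := by
      intro x hx
      have hx0 := hx.1
      have hxc := hx.2
      have hd0 : (0:ℝ) < (d:ℝ) := by linarith
      have h1x : (d:ℝ)⁻¹ ≤ 1 - x := by linarith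
      have hlog1 : Real.log ((d:ℝ)⁻¹) ≤ Real.log (1-x) :=
        Real.log_le_log (inv_pos.mpr hd0) h1x
      have hlog2 : Real.log x ≤ Real.log (1 - (d:ℝ)⁻¹) :=
        Real.log_le_log hx0 (le_of_lt hxc)
      have e1 : Real.log ((d:ℝ)⁻¹) = -Real.log d := Real.log_inv d
      have e2 : Real.log (1 - (d:ℝ)⁻¹) = Real.log ((d:ℝ) - 1) - Real.log d := by
        rw [show (1 - (d:ℝ)⁻¹) = ((d:ℝ) - 1) / d by field_simp]
        rw [Real.log_div (by linarith) (by linarith)]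
      rw [e1] at hlog1; rw [e2] at hlog2
      rw [hLdef]; linarith
    have hc0' : (0:ℝ) < 1 - (d:ℝ)⁻¹ := by
      have : (d:ℝ)⁻¹ < 1 := by rw [inv_lt_one_iff₀]; right; linarith
      linarith
    have hc1' : 1 - (d:ℝ)⁻¹ < 1 := by
      have : (0:ℝ) < (d:ℝ)⁻¹ := inv_pos.mpr (by linarith)
      linarith
    have hmono := mono_g (L := L) (c := 1 - (d:ℝ)⁻¹) hc0' hc1' hkey
    have h2 : binEnt δ + δ * L ≤ binEnt ε + ε * L := by
      have := hmono (Set.mem_Icc.mpr ⟨hδ0, le_trans hδε hεc⟩)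
        (Set.mem_Icc.mpr ⟨le_of_lt hε0, hεc⟩) hδε
      simpa using this
    calc ∑ i, eta (p i) - ∑ i, eta (q i) ≤ binEnt δ + δ * L := hcomb
      _ ≤ binEnt ε + ε * L := h2
      _ = ε * L + binEnt ε := by ring

set_option maxHeartbeats 1000000 in
/-- classical bound for the large ε case : a prob. vector with some entry `≤ 1 - ε`. -/
lemma classical_large {ε : ℝ} (hd : 2 ≤ d) (v : Fin d → ℝ)
    (hv0 : ∀ i, 0 ≤ v i) (hv1 : ∑ i, v i = 1) (i₀ : Fin d) (hi₀ : v i₀ ≤ 1 - ε)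
    (hε0 : 0 < ε) (hε1 : ε < 1) (hεc : 1 - (d:ℝ)⁻¹ ≤ ε) :
    ∑ i, eta (v i) ≤ ε * Real.log ((d:ℝ) - 1) + binEnt ε := by
  have hdR : (2:ℝ) ≤ (d:ℝ) := by exact_mod_cast hd
  have hL : 0 ≤ Real.log ((d:ℝ) - 1) := log_dm1_nonneg hd
  set L := Real.log ((d:ℝ) - 1) with hLdef
  set m := v i₀ with hm
  have hm0 : 0 ≤ m := hv0 i₀
  have hcard : ((Finset.univ.erase i₀ : Finset (Fin d)).card : ℝ) = (d:ℝ) - 1 := by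
    rw [Finset.card_erase_of_mem (Finset.mem_univ i₀), Finset.card_univ, Fintype.card_fin]
    have : 1 ≤ d := le_trans (by norm_num) hd
    push_cast [Nat.cast_sub this]
    ring
  have hsplit : ∑ i, eta (v i) = eta m + ∑ i ∈ Finset.univ.erase i₀, eta (v i) := by
    rw [← Finset.add_sum_erase _ _ (Finset.mem_univ i₀)]
  have hrest : ∑ i ∈ Finset.univ.erase i₀, v i = 1 - m := by
    have := Finset.add_sum_erase Finset.univ v (Finset.mem_univ i₀)
    rw [hv1] at this; linarith
  have hjen := sum_eta_le (Finset.univ.erase i₀) v (fun i _ => hv0 i)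
  rw [hrest, hcard] at hjen
  have step1 : ∑ i, eta (v i) ≤ binEnt m + (1 - m) * L := by
    rw [hsplit, binEnt_eq]
    linarith [hjen]
  -- monotonicity of binEnt x + (1-x) L on [0, 1/d]
  have hcinv0 : (0:ℝ) < (d:ℝ)⁻¹ := inv_pos.mpr (by linarith)
  have hcinv1 : (d:ℝ)⁻¹ < 1 := by rw [inv_lt_one_iff₀]; right; linarith
  have hkey : ∀ x ∈ Set.Ioo (0:ℝ) ((d:ℝ)⁻¹), 0 ≤ Real.log (1 - x) - Real.log x - L := by
    intro x hx
    have hx0 := hx.1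
    have hxc := hx.2
    have hd0 : (0:ℝ) < (d:ℝ) := by linarith
    have h1x : 1 - (d:ℝ)⁻¹ ≤ 1 - x := by linarith
    have hlog1 : Real.log (1 - (d:ℝ)⁻¹) ≤ Real.log (1-x) := by
      apply Real.log_le_log _ h1x
      linarith
    have hlog2 : Real.log x ≤ Real.log ((d:ℝ)⁻¹) := Real.log_le_log hx0 (le_of_lt hxc)
    have e1 : Real.log ((d:ℝ)⁻¹) = -Real.log d := Real.log_inv d
    have e2 : Real.log (1 - (d:ℝ)⁻¹) = Real.log ((d:ℝ) - 1) - Real.log d := by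
      rw [show (1 - (d:ℝ)⁻¹) = ((d:ℝ) - 1) / d by field_simp]
      rw [Real.log_div (by linarith) (by linarith)]
    rw [e1] at hlog2; rw [e2] at hlog1
    rw [hLdef]; linarith
  have hmono := mono_phi (L := L) (c := (d:ℝ)⁻¹) hcinv0 hcinv1 hkey
  have h1εc : 1 - ε ≤ (d:ℝ)⁻¹ := by linarith
  have h2 : binEnt m + (1 - m) * L ≤ binEnt (1 - ε) + (1 - (1 - ε)) * L := by
    have := hmono (Set.mem_Icc.mpr ⟨hm0, le_trans hi₀ h1εc⟩)
      (Set.mem_Icc.mpr ⟨by linarith, h1εc⟩) hi₀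
    simpa using this
  calc ∑ i, eta (v i) ≤ binEnt m + (1 - m) * L := step1
    _ ≤ binEnt (1 - ε) + (1 - (1 - ε)) * L := h2
    _ = ε * L + binEnt ε := by rw [binEnt_symm]; ring

end Classical


section Quantum
variable {d : ℕ}

lemma density_eigs_nonneg {ρ : Matrix (Fin d) (Fin d) ℂ} (h : IsDensity ρ)
    (hH : ρ.IsHermitian) (i : Fin d) : 0 ≤ hH.eigenvalues i :=
  h.1.eigenvalues_nonneg i

lemma density_eigs_sum {ρ : Matrix (Fin d) (Fin d) ℂ} (h : IsDensity ρ)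
    (hH : ρ.IsHermitian) : ∑ i, hH.eigenvalues i = 1 := by
  have h1 : ρ.trace = ∑ i, (hH.eigenvalues i : ℂ) := trace_eq_sum_eigs hH
  rw [h.2] at h1
  have : ((∑ i, hH.eigenvalues i : ℝ) : ℂ) = 1 := by
    rw [Complex.ofReal_sum]; exact h1.symm
  exact_mod_cast this

lemma vnEntropy_eq {ρ : Matrix (Fin d) (Fin d) ℂ} (hH : ρ.IsHermitian) :
    vnEntropy ρ = ∑ i, eta (hH.eigenvalues i) := by
  unfold vnEntropy
  rw [dif_pos hH]

lemma vnEntropy_nonneg {ρ : Matrix (Fin d) (Fin d) ℂ} (h : IsDensity ρ)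
    (hH : ρ.IsHermitian) : 0 ≤ vnEntropy ρ := by
  rw [vnEntropy_eq hH]
  refine Finset.sum_nonneg fun i _ => eta_nonneg (density_eigs_nonneg h hH i) ?_
  calc hH.eigenvalues i ≤ ∑ j, hH.eigenvalues j :=
        Finset.single_le_sum (fun j _ => density_eigs_nonneg h hH j) (Finset.mem_univ i)
    _ = 1 := density_eigs_sum h hH

set_option maxHeartbeats 1000000 in
/-- one-sided Audenaert--Fannes. -/
lemma one_sided (hd : 2 ≤ d) (ρ₁ ρ₂ : Matrix (Fin d) (Fin d) ℂ)
    (h1 : IsDensity ρ₁) (h2 : IsDensity ρ₂) (ε : ℝ) (hε : ε ∈ Set.Ioo (0:ℝ) 1)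
    (hΔ : (ρ₁ - ρ₂).IsHermitian)
    (hsum : ∑ j, |hΔ.eigenvalues j| = 2 * ε) :
    vnEntropy ρ₁ - vnEntropy ρ₂ ≤ ε * Real.log ((d:ℝ) - 1) + binEnt ε := by
  obtain ⟨hε0, hε1⟩ := hε
  have hdR : (2:ℝ) ≤ (d:ℝ) := by exact_mod_cast hd
  have h1H : ρ₁.IsHermitian := h1.1.1
  have h2H : ρ₂.IsHermitian := h2.1.1
  by_cases hc : ε ≤ 1 - (d:ℝ)⁻¹
  · -- small ε : pinching reduction
    set U : Matrix (Fin d) (Fin d) ℂ := (h2H.eigenvectorUnitary : Matrix (Fin d) (Fin d) ℂ)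
      with hU
    have hUu : U ∈ Matrix.unitaryGroup (Fin d) ℂ := h2H.eigenvectorUnitary.2
    set p : Fin d → ℝ := fun i => ((star U * ρ₁ * U) i i).re with hp
    set q : Fin d → ℝ := fun i => h2H.eigenvalues i with hq
    have hp0 : ∀ i, 0 ≤ p i := fun i =>
      diag_ge_min h1H 0 (fun j => density_eigs_nonneg h1 h1H j) U hUu i
    have hq0 : ∀ i, 0 ≤ q i := fun i => density_eigs_nonneg h2 h2H i
    have hp1 : ∑ i, p i = 1 := by
      rw [hp]
      rw [sum_diag_re h1H U hUu]
      exact density_eigs_sum h1 h1H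
    have hq1 : ∑ i, q i = 1 := density_eigs_sum h2 h2H
    -- q is the diagonal of the conjugated ρ₂
    have hqdiag : ∀ i, ((star U * ρ₂ * U) i i).re = q i := by
      intro i
      have hcs := h2H.conjStarAlgAut_star_eigenvectorUnitary
      simp only [Unitary.conjStarAlgAut_star_apply, Unitary.coe_star] at hcs
      rw [hU, hcs]
      simp [Matrix.diagonal_apply_eq]
      rfl
    -- difference of diagonals
    have hdiff : ∀ i, p i - q i = ((star U * (ρ₁ - ρ₂) * U) i i).re := by
      intro i
      rw [← hqdiag i, hp]
      have : star U * (ρ₁ - ρ₂) * U = star U * ρ₁ * U - star U * ρ₂ * U := by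
        rw [Matrix.mul_sub, Matrix.sub_mul]
      rw [this, Matrix.sub_apply, Complex.sub_re]
    have habs : ∑ i, |p i - q i| ≤ 2 * ε := by
      rw [← hsum]
      calc ∑ i, |p i - q i| = ∑ i, |((star U * (ρ₁ - ρ₂) * U) i i).re| :=
            Finset.sum_congr rfl fun i _ => by rw [hdiff i]
        _ ≤ ∑ j, |hΔ.eigenvalues j| := sum_abs_diag_le hΔ U hUu
    have hzero : ∑ i, (p i - q i) = 0 := by
      rw [Finset.sum_sub_distrib, hp1, hq1]; ring
    have hδε : ∑ i, max (p i - q i) 0 ≤ ε := by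
      have : ∀ i : Fin d, max (p i - q i) 0 = ((p i - q i) + |p i - q i|) / 2 := by
        intro i; rcases le_total (p i - q i) 0 with h | h
        · rw [max_eq_right h, abs_of_nonpos h]; ring
        · rw [max_eq_left h, abs_of_nonneg h]; ring
      rw [Finset.sum_congr rfl fun i _ => this i]
      have := Finset.sum_add_distrib (s := (Finset.univ : Finset (Fin d)))
        (f := fun i => p i - q i) (g := fun i => |p i - q i|)
      calc ∑ i, ((p i - q i) + |p i - q i|) / 2
          = (∑ i, ((p i - q i) + |p i - q i|)) / 2 := by rw [Finset.sum_div]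
        _ = ((∑ i, (p i - q i)) + ∑ i, |p i - q i|) / 2 := by rw [this]
        _ ≤ (0 + 2 * ε) / 2 := by
            apply div_le_div_of_nonneg_right _ (by norm_num)
            · rw [hzero]; linarith
        _ = ε := by ring
    have hcls := classical_small hd p q hp0 hq0 hp1 hq1 hδε hε0 hc
    have hS1 : vnEntropy ρ₁ ≤ ∑ i, eta (p i) := by
      rw [vnEntropy_eq h1H]
      exact sum_eta_diag_ge h1H (density_eigs_nonneg h1 h1H) U hUu
    have hS2 : vnEntropy ρ₂ = ∑ i, eta (q i) := vnEntropy_eq h2H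
    linarith
  · -- large ε
    push_neg at hc
    have hεc : 1 - (d:ℝ)⁻¹ ≤ ε := le_of_lt hc
    set V : Matrix (Fin d) (Fin d) ℂ := (hΔ.eigenvectorUnitary : Matrix (Fin d) (Fin d) ℂ)
      with hV
    have hVu : V ∈ Matrix.unitaryGroup (Fin d) ℂ := hΔ.eigenvectorUnitary.2
    set g : Fin d → ℝ := fun j => ((star V * ρ₁ * V) j j).re with hg
    set g' : Fin d → ℝ := fun j => ((star V * ρ₂ * V) j j).re with hg'
    set ν : Fin d → ℝ := fun j => hΔ.eigenvalues j with hν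
    have hg0 : ∀ j, 0 ≤ g j := fun j =>
      diag_ge_min h1H 0 (fun i => density_eigs_nonneg h1 h1H i) V hVu j
    have hg'0 : ∀ j, 0 ≤ g' j := fun j =>
      diag_ge_min h2H 0 (fun i => density_eigs_nonneg h2 h2H i) V hVu j
    have hg1 : ∑ j, g j = 1 := by
      rw [hg, sum_diag_re h1H V hVu]; exact density_eigs_sum h1 h1H
    have hνdiag : ∀ j, g j - g' j = ν j := by
      intro j
      have hsub : star V * (ρ₁ - ρ₂) * V = star V * ρ₁ * V - star V * ρ₂ * V := by
        rw [Matrix.mul_sub, Matrix.sub_mul]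
      have h1' : ((star V * (ρ₁ - ρ₂) * V) j j).re = ν j := by
        have hcs := hΔ.conjStarAlgAut_star_eigenvectorUnitary
        simp only [Unitary.conjStarAlgAut_star_apply, Unitary.coe_star] at hcs
        rw [hV, hcs]
        simp [Matrix.diagonal_apply_eq]
        rfl
      rw [← h1', hsub, Matrix.sub_apply, Complex.sub_re]
    have hνsum : ∑ j, ν j = 0 := by
      have h1' : (ρ₁ - ρ₂).trace = ∑ j, (ν j : ℂ) := trace_eq_sum_eigs hΔ
      rw [Matrix.trace_sub, h1.2, h2.2, sub_self] at h1'
      have : ((∑ j, ν j : ℝ) : ℂ) = 0 := by rw [Complex.ofReal_sum]; exact h1'.symm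
      exact_mod_cast this
    have hνpos : ε ≤ ∑ j, max (ν j) 0 := by
      have : ∀ j : Fin d, max (ν j) 0 = ((ν j) + |ν j|) / 2 := by
        intro j; rcases le_total (ν j) 0 with h | h
        · rw [max_eq_right h, abs_of_nonpos h]; ring
        · rw [max_eq_left h, abs_of_nonneg h]; ring
      rw [Finset.sum_congr rfl fun j _ => this j]
      refine le_of_eq ?_
      calc ε = (0 + 2 * ε) / 2 := by ring
        _ = ((∑ j, ν j) + ∑ j, |ν j|) / 2 := by rw [hνsum, hsum]
        _ = (∑ j, ((ν j) + |ν j|)) / 2 := by rw [Finset.sum_add_distrib]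
        _ = ∑ j, ((ν j) + |ν j|) / 2 := by rw [Finset.sum_div]
    have hj₀ : ∃ j₀ : Fin d, ν j₀ ≤ 0 := by
      by_contra hno
      push_neg at hno
      have : 0 < ∑ j, ν j := Finset.sum_pos (fun j _ => hno j)
        ⟨⟨0, by omega⟩, Finset.mem_univ _⟩
      linarith
    obtain ⟨j₀, hj₀⟩ := hj₀
    have hgj₀ : g j₀ ≤ 1 - ε := by
      have step : ∑ j, max (ν j) 0 = ∑ j ∈ Finset.univ.erase j₀, max (ν j) 0 := by
        exact (Finset.sum_erase _ (by rw [max_eq_right hj₀])).symm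
      have step2 : ∑ j ∈ Finset.univ.erase j₀, max (ν j) 0 ≤ ∑ j ∈ Finset.univ.erase j₀, g j := by
        refine Finset.sum_le_sum fun j _ => ?_
        rw [max_le_iff]
        constructor
        · have := hνdiag j; have := hg'0 j; linarith
        · exact hg0 j
      have step3 : ∑ j ∈ Finset.univ.erase j₀, g j = 1 - g j₀ := by
        have := Finset.add_sum_erase Finset.univ g (Finset.mem_univ j₀)
        rw [hg1] at this; linarith
      have := hνpos
      rw [step] at this
      linarith [step2, step3]
    -- find a small eigenvalue of ρ₁
    obtain ⟨i₀, _, hi₀min⟩ := Finset.exists_min_image (Finset.univ : Finset (Fin d))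
      (fun i => h1H.eigenvalues i) ⟨⟨0, by omega⟩, Finset.mem_univ _⟩
    have hi₀ : h1H.eigenvalues i₀ ≤ 1 - ε := by
      have : h1H.eigenvalues i₀ ≤ g j₀ :=
        diag_ge_min h1H (h1H.eigenvalues i₀) (fun j => hi₀min j (Finset.mem_univ j)) V hVu j₀
      linarith
    have hcls := classical_large hd (fun i => h1H.eigenvalues i)
      (fun i => density_eigs_nonneg h1 h1H i) (density_eigs_sum h1 h1H) i₀ hi₀ hε0 hε1 hεc
    have hS1 : vnEntropy ρ₁ ≤ ε * Real.log ((d:ℝ) - 1) + binEnt ε := by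
      rw [vnEntropy_eq h1H]; exact hcls
    have hS2 : 0 ≤ vnEntropy ρ₂ := vnEntropy_nonneg h2 h2H
    linarith

end Quantum

section Final
variable {d : ℕ}

lemma sum_abs_eigs_le_of_neg {A B : Matrix (Fin d) (Fin d) ℂ}
    (hA : A.IsHermitian) (hB : B.IsHermitian) (h : B = -A) :
    ∑ j, |hB.eigenvalues j| ≤ ∑ j, |hA.eigenvalues j| := by
  set V : Matrix (Fin d) (Fin d) ℂ := (hB.eigenvectorUnitary : Matrix (Fin d) (Fin d) ℂ) with hV
  have hVu : V ∈ Matrix.unitaryGroup (Fin d) ℂ := hB.eigenvectorUnitary.2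
  have hdiag : ∀ j, |hB.eigenvalues j| = |((star V * A * V) j j).re| := by
    intro j
    have h1 : ((star V * B * V) j j).re = hB.eigenvalues j := by
      have hcs := hB.conjStarAlgAut_star_eigenvectorUnitary
      simp only [Unitary.conjStarAlgAut_star_apply, Unitary.coe_star] at hcs
      rw [hV, hcs]
      simp [Matrix.diagonal_apply_eq]
    have h2 : star V * B * V = -(star V * A * V) := by
      rw [h]; simp [Matrix.mul_neg, Matrix.neg_mul]
    rw [← h1, h2]
    simp [Matrix.neg_apply]
  calc ∑ j, |hB.eigenvalues j| = ∑ j, |((star V * A * V) j j).re| :=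
        Finset.sum_congr rfl fun j _ => hdiag j
    _ ≤ ∑ j, |hA.eigenvalues j| := sum_abs_diag_le hA V hVu

theorem audenaert_fannes' (hd : 2 ≤ d) (ρ₁ ρ₂ : Matrix (Fin d) (Fin d) ℂ)
    (h1 : IsDensity ρ₁) (h2 : IsDensity ρ₂)
    (ε : ℝ) (hε : ε ∈ Set.Ioo (0 : ℝ) 1)
    (htr : traceNorm (ρ₁ - ρ₂) / 2 = ε) :
    |vnEntropy ρ₁ - vnEntropy ρ₂| ≤ ε * Real.log ((d : ℝ) - 1) + binEnt ε := by
  have hΔ : (ρ₁ - ρ₂).IsHermitian := h1.1.1.sub h2.1.1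
  have hΔ2 : (ρ₂ - ρ₁).IsHermitian := h2.1.1.sub h1.1.1
  have hsum : ∑ j, |hΔ.eigenvalues j| = 2 * ε := by
    unfold traceNorm at htr
    rw [dif_pos hΔ] at htr
    linarith
  have hsum2 : ∑ j, |hΔ2.eigenvalues j| = 2 * ε := by
    rw [← hsum]
    refine le_antisymm ?_ ?_
    · exact sum_abs_eigs_le_of_neg hΔ hΔ2 (neg_sub ρ₁ ρ₂).symm
    · exact sum_abs_eigs_le_of_neg hΔ2 hΔ (neg_sub ρ₂ ρ₁).symm
  have hdir1 := one_sided hd ρ₁ ρ₂ h1 h2 ε hε hΔ hsum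
  have hdir2 := one_sided hd ρ₂ ρ₁ h2 h1 ε hε hΔ2 hsum2
  rw [abs_le]
  constructor <;> linarith

end Final


/-- Audenaert–Fannes: `|S(ρ₁) - S(ρ₂)| ≤ ε log(d - 1) + h(ε)`. -/
theorem audenaert_fannes {d : ℕ} (hd : 2 ≤ d) (ρ₁ ρ₂ : Matrix (Fin d) (Fin d) ℂ)
    (h1 : IsDensity ρ₁) (h2 : IsDensity ρ₂)
    (ε : ℝ) (hε : ε ∈ Set.Ioo (0 : ℝ) 1)
    (htr : traceNorm (ρ₁ - ρ₂) / 2 = ε) :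
    |vnEntropy ρ₁ - vnEntropy ρ₂| ≤ ε * Real.log ((d : ℝ) - 1) + binEnt ε := by
  exact audenaert_fannes' hd ρ₁ ρ₂ h1 h2 ε hε htr
end
end

section
/- Tightness of the fundamental entropic inequality: for ρ₁ = (1−ε)|ψ⟩⟨ψ| + (ε/(d−1))(𝟙 − |ψ⟩⟨ψ|) and ρ₂ = |ψ⟩⟨ψ| on ℂ^d with d ≥ 2 and ε ∈ (0,1), one has (1/2)‖ρ₁ − ρ₂‖₁ = ε and S(ρ₁) − S(ρ₂) = ε S(ρ₊) − ε S(ρ₋) + h(ε), where ρ± are the normalized positive/negative parts of ρ₁ − ρ₂. -/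
open Matrix BigOperators
open scoped ComplexOrder

noncomputable section

section
open Polynomial

namespace FEIT

variable {d : ℕ}

def cf (U : Matrix (Fin d) (Fin d) ℂ) (f : Fin d → ℝ) : Matrix (Fin d) (Fin d) ℂ :=
  U * Matrix.diagonal (fun i => (f i : ℂ)) * star U

lemma diagHerm (f : Fin d → ℝ) : (Matrix.diagonal (fun i => (f i : ℂ))).IsHermitian := by
  rw [Matrix.isHermitian_diagonal_iff]
  intro i
  exact Complex.conj_ofReal _

lemma cf_isHermitian (U : Matrix (Fin d) (Fin d) ℂ) (f : Fin d → ℝ) :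
    (cf U f).IsHermitian := by
  simpa [cf, Matrix.star_eq_conjTranspose, Matrix.mul_assoc] using
    Matrix.isHermitian_mul_mul_conjTranspose U (diagHerm f)

lemma cf_add (U : Matrix (Fin d) (Fin d) ℂ) (f g : Fin d → ℝ) :
    cf U f + cf U g = cf U (f + g) := by
  unfold cf
  rw [← add_mul, ← Matrix.mul_add, Matrix.diagonal_add]
  congr 2
  ext i
  push_cast
  simp

lemma cf_sub (U : Matrix (Fin d) (Fin d) ℂ) (f g : Fin d → ℝ) :
    cf U f - cf U g = cf U (f - g) := by
  unfold cf
  rw [← sub_mul, ← Matrix.mul_sub, Matrix.diagonal_sub]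
  congr 2
  ext i
  push_cast
  simp

lemma cf_smul (U : Matrix (Fin d) (Fin d) ℂ) (f : Fin d → ℝ) (r : ℝ) :
    r • cf U f = cf U (r • f) := by
  unfold cf
  rw [← Matrix.smul_mul, ← Matrix.mul_smul, ← Matrix.diagonal_smul]
  have h : (r • fun i => ((f i : ℂ))) = fun i => (((r • f) i : ℝ) : ℂ) := by
    funext i
    simp [Complex.real_smul]
  rw [h]

lemma cf_one (U : Matrix (Fin d) (Fin d) ℂ) (hU1 : U * star U = 1) :
    cf U (fun _ => 1) = 1 := by
  unfold cf
  simp [Matrix.diagonal_one, hU1]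

lemma cf_mul (U : Matrix (Fin d) (Fin d) ℂ) (hU2 : star U * U = 1) (f g : Fin d → ℝ) :
    cf U f * cf U g = cf U (f * g) := by
  unfold cf
  have h : U * Matrix.diagonal (fun i => (f i : ℂ)) * star U *
      (U * Matrix.diagonal (fun i => (g i : ℂ)) * star U)
      = U * (Matrix.diagonal (fun i => (f i : ℂ)) * (star U * U) *
        Matrix.diagonal (fun i => (g i : ℂ))) * star U := by
    noncomm_ring
  rw [h, hU2, Matrix.mul_one, Matrix.diagonal_mul_diagonal]
  congr 2
  ext i
  simp

lemma cf_posSemidef (U : Matrix (Fin d) (Fin d) ℂ) (f : Fin d → ℝ) (hf : ∀ i, 0 ≤ f i) :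
    (cf U f).PosSemidef := by
  have hD : (Matrix.diagonal (fun i => (f i : ℂ))).PosSemidef := by
    rw [Matrix.posSemidef_diagonal_iff]
    intro i
    simpa using hf i
  simpa [cf, Matrix.star_eq_conjTranspose, Matrix.mul_assoc] using
    hD.mul_mul_conjTranspose_same U

lemma charpoly_cf (U : Matrix (Fin d) (Fin d) ℂ) (hU1 : U * star U = 1) (f : Fin d → ℝ) :
    (cf U f).charpoly = ∏ i, (X - C ((f i : ℂ))) := by
  classical
  set CC : ℂ →+* ℂ[X] := Polynomial.C with hCC
  set Um := U.map CC with hUmdef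
  set sUm := (star U).map CC with hsUmdef
  have hUm : Um * sUm = 1 := by
    rw [hUmdef, hsUmdef, ← Matrix.map_mul, hU1, Matrix.map_one CC (map_zero _) (map_one _)]
  set D : Matrix (Fin d) (Fin d) ℂ[X] := Matrix.diagonal (fun i => CC ((f i : ℂ))) with hD
  have hmap : (cf U f).map CC = Um * D * sUm := by
    unfold cf
    rw [Matrix.map_mul, Matrix.map_mul, hD]
    congr 2
    rw [Matrix.diagonal_map (map_zero CC)]
  have hcomm : Um * Matrix.scalar (Fin d) (X : ℂ[X]) = Matrix.scalar (Fin d) (X : ℂ[X]) * Um :=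
    (Matrix.scalar_commute (X : ℂ[X]) (fun r => Commute.all _ _) Um).symm
  have hcm : charmatrix (cf U f) = Um * (Matrix.scalar (Fin d) (X : ℂ[X]) - D) * sUm := by
    rw [Matrix.mul_sub, Matrix.sub_mul, hcomm]
    rw [Matrix.mul_assoc, hUm, Matrix.mul_one]
    rw [charmatrix, RingHom.mapMatrix_apply, hmap]
  have hdet : (cf U f).charpoly = (Matrix.scalar (Fin d) (X : ℂ[X]) - D).det := by
    rw [Matrix.charpoly, hcm, Matrix.det_mul, Matrix.det_mul]
    rw [mul_comm, ← mul_assoc, ← Matrix.det_mul, mul_eq_one_comm.mp hUm]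
    simp
  rw [hdet, Matrix.scalar_apply, hD, Matrix.diagonal_sub, Matrix.det_diagonal]

lemma roots_prod (a : Fin d → ℝ) :
    (∏ i, (X - C ((a i : ℂ)))).roots = (Finset.univ.val.map fun i => ((a i : ℂ))) := by
  rw [Finset.prod_eq_multiset_prod]
  have : (Multiset.map (fun i => X - C ((a i : ℂ))) Finset.univ.val)
      = Multiset.map (fun z : ℂ => X - C z) (Finset.univ.val.map fun i => ((a i : ℂ))) := by
    rw [Multiset.map_map]
    rfl
  rw [this]
  exact Polynomial.roots_multiset_prod_X_sub_C _

lemma eig_sum (U : Matrix (Fin d) (Fin d) ℂ) (hU1 : U * star U = 1) (f : Fin d → ℝ)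
    (hA : (cf U f).IsHermitian) (g : ℝ → ℝ) :
    ∑ i, g (hA.eigenvalues i) = ∑ i, g (f i) := by
  classical
  have hV := hA.eigenvectorUnitary.2
  rw [Unitary.mem_iff] at hV
  have hspec : cf (hA.eigenvectorUnitary : Matrix (Fin d) (Fin d) ℂ) hA.eigenvalues = cf U f := by
    rw [cf]
    exact (hA.spectral_theorem).symm
  have hcp : (∏ i, (X - C ((hA.eigenvalues i : ℂ)))) = ∏ i, (X - C ((f i : ℂ))) := by
    rw [← charpoly_cf _ hV.2 hA.eigenvalues, ← charpoly_cf U hU1 f, hspec]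
  have hroots := congrArg Polynomial.roots hcp
  rw [roots_prod, roots_prod] at hroots
  have hmm : Finset.univ.val.map hA.eigenvalues = Finset.univ.val.map f := by
    apply Multiset.map_injective Complex.ofReal_injective
    simpa [Multiset.map_map, Function.comp_def] using hroots
  rw [Finset.sum_eq_multiset_sum, Finset.sum_eq_multiset_sum]
  rw [show (Finset.univ.val.map fun i => g (hA.eigenvalues i))
      = (Finset.univ.val.map hA.eigenvalues).map g by rw [Multiset.map_map]; rfl]
  rw [show (Finset.univ.val.map fun i => g (f i))
      = (Finset.univ.val.map f).map g by rw [Multiset.map_map]; rfl]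
  rw [hmm]

end FEIT

namespace FEIT
variable {d : ℕ}

lemma psd_real_smul {A : Matrix (Fin d) (Fin d) ℂ} (hA : A.PosSemidef) {r : ℝ} (hr : 0 ≤ r) :
    (r • A).PosSemidef := by
  constructor
  · show (r • A)ᴴ = r • A
    rw [Matrix.conjTranspose_smul, star_trivial, hA.1.eq]
  · exact (hA.smul hr).2

lemma sum_g_ite (i0 : Fin d) (a bb : ℝ) (g : ℝ → ℝ) :
    ∑ i, g (if i = i0 then a else bb) = g a + ((d : ℝ) - 1) * g bb := by
  classical
  rw [← Finset.add_sum_erase _ _ (Finset.mem_univ i0), if_pos rfl]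
  congr 1
  rw [Finset.sum_congr rfl (fun i hi => by rw [if_neg (Finset.ne_of_mem_erase hi)])]
  rw [Finset.sum_const, Finset.card_erase_of_mem (Finset.mem_univ i0), Finset.card_univ,
    Fintype.card_fin, nsmul_eq_mul, Nat.cast_sub i0.pos]
  norm_num

end FEIT

namespace FEIT2

lemma exists_U {d : ℕ} (hd : 0 < d) (ψ : Fin d → ℂ) (hψ : ∑ i, Complex.normSq (ψ i) = 1) :
    ∃ U : Matrix (Fin d) (Fin d) ℂ, star U * U = 1 ∧
      (Matrix.of fun i j => ψ i * star (ψ j))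
        = U * Matrix.diagonal (fun i => (((if i = (⟨0, hd⟩ : Fin d) then (1:ℝ) else 0)) : ℂ)) * star U := by
  classical
  set ψE : EuclideanSpace ℂ (Fin d) := (WithLp.equiv 2 (Fin d → ℂ)).symm ψ with hψE
  have hψEa : ∀ i, ψE i = ψ i := fun i => rfl
  have hnorm : ‖ψE‖ = 1 := by
    rw [EuclideanSpace.norm_eq]
    have : ∀ i, ‖ψE i‖ ^ 2 = Complex.normSq (ψ i) := by
      intro i
      rw [hψEa, Complex.sq_norm]
    rw [Finset.sum_congr rfl (fun i _ => this i), hψ, Real.sqrt_one]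
  set i0 : Fin d := ⟨0, hd⟩
  have horthn : Orthonormal ℂ (({i0} : Set (Fin d)).restrict (fun _ => ψE)) := by
    constructor
    · intro i
      exact hnorm
    · intro i j hij
      exact absurd (Subtype.ext (i.2.trans j.2.symm)) hij
  obtain ⟨b, hb⟩ := horthn.exists_orthonormalBasis_extension_of_card_eq
    (by simp [finrank_euclideanSpace]) 
  have hb0 : b i0 = ψE := hb i0 rfl
  refine ⟨Matrix.of fun i j => b j i, ?_, ?_⟩
  · ext i j
    have hinner := orthonormal_iff_ite.mp b.orthonormal i j
    rw [PiLp.inner_apply] at hinner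
    simp only [RCLike.inner_apply] at hinner
    rw [Matrix.mul_apply, Matrix.one_apply]
    simpa [Matrix.star_apply, Matrix.of_apply, mul_comm] using hinner
  · ext i j
    rw [Matrix.mul_apply]
    rw [Finset.sum_eq_single i0 ?h1 ?h2]
    · rw [Matrix.mul_diagonal, Matrix.star_apply, Matrix.of_apply, Matrix.of_apply,
        Matrix.of_apply, if_pos rfl, hb0]
      simp [hψEa]
    · intro k _ hk
      rw [Matrix.mul_diagonal, if_neg hk]
      simp
    · intro h
      exact absurd (Finset.mem_univ i0) h

end FEIT2


end

/-- tightness of the fundamental entropic inequality. -/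
theorem fundamental_entropic_inequality_tight {d : ℕ} (hd : 2 ≤ d)
    (ψ : Fin d → ℂ) (hψ : ∑ i, Complex.normSq (ψ i) = 1)
    (ε : ℝ) (hε : ε ∈ Set.Ioo (0 : ℝ) 1)
    (ρ₁ ρ₂ ρp ρm : Matrix (Fin d) (Fin d) ℂ)
    (hρ₂ : ρ₂ = Matrix.of fun i j => ψ i * star (ψ j))
    (hρ₁ : ρ₁ = (1 - ε) • ρ₂ + (ε / ((d : ℝ) - 1)) • ((1 : Matrix (Fin d) (Fin d) ℂ) - ρ₂))
    (hp : IsDensity ρp) (hm : IsDensity ρm)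
    (hJH : ρ₁ - ρ₂ = ε • ρp - ε • ρm)
    (horth : ρp * ρm = 0) :
    traceNorm (ρ₁ - ρ₂) / 2 = ε ∧
    vnEntropy ρ₁ - vnEntropy ρ₂ = ε * vnEntropy ρp - ε * vnEntropy ρm + binEnt ε := by
  classical
  obtain ⟨hε0, hε1⟩ := hε
  have hd0 : 0 < d := by omega
  have hc : 0 < (d : ℝ) - 1 := by
    have h2 : (2:ℝ) ≤ (d:ℝ) := by exact_mod_cast hd
    linarith
  set c : ℝ := (d : ℝ) - 1 with hcdef
  have hcne : c ≠ 0 := ne_of_gt hc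
  have hεne : ε ≠ 0 := ne_of_gt hε0
  obtain ⟨U, hU2, hρ₂U⟩ := FEIT2.exists_U hd0 ψ hψ
  have hU1 : U * star U = 1 := mul_eq_one_comm.mp hU2
  set i0 : Fin d := ⟨0, hd0⟩ with hi0
  set e0 : Fin d → ℝ := fun i => if i = i0 then 1 else 0 with he0
  have hρ₂cf : ρ₂ = FEIT.cf U e0 := by
    rw [hρ₂, hρ₂U]
    unfold FEIT.cf
    have harg : (fun i => (((e0 i : ℝ)) : ℂ)) = fun i => if i = i0 then (1:ℂ) else 0 := by
      funext i
      by_cases h : i = i0 <;> simp [he0, h]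
    rw [harg]
    norm_num
  set f1 : Fin d → ℝ := fun i => if i = i0 then 1 - ε else ε / c with hf1
  set gD : Fin d → ℝ := fun i => if i = i0 then -ε else ε / c with hgD
  set aD : Fin d → ℝ := fun i => if i = i0 then ε else ε / c with haD
  set pv : Fin d → ℝ := fun i => if i = i0 then 0 else 1 / c with hpv
  have hone : (1 : Matrix (Fin d) (Fin d) ℂ) = FEIT.cf U (fun _ => 1) := (FEIT.cf_one U hU1).symm
  have hρ₁cf : ρ₁ = FEIT.cf U f1 := by
    rw [hρ₁, hρ₂cf, hone, FEIT.cf_sub, FEIT.cf_smul, FEIT.cf_smul, FEIT.cf_add]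
    apply congrArg (FEIT.cf U)
    funext i
    by_cases h : i = i0 <;>
      simp only [Pi.add_apply, Pi.smul_apply, Pi.sub_apply, he0, hf1, h, if_true, if_pos,
        if_neg, smul_eq_mul, not_false_iff] <;> simp [h] <;> ring
  have hΔcf : ρ₁ - ρ₂ = FEIT.cf U gD := by
    rw [hρ₁cf, hρ₂cf, FEIT.cf_sub]
    apply congrArg (FEIT.cf U)
    funext i
    by_cases h : i = i0 <;> simp [hf1, he0, hgD, h]
  have hpH : ρp.IsHermitian := hp.1.1
  have hmH : ρm.IsHermitian := hm.1.1
  have hmp : ρm * ρp = 0 := by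
    have hct := congrArg Matrix.conjTranspose horth
    rwa [Matrix.conjTranspose_mul, hpH.eq, hmH.eq, Matrix.conjTranspose_zero] at hct
  have h1 : (ε • ρp) * (ε • ρm) = 0 := by
    rw [Matrix.smul_mul, Matrix.mul_smul, horth, smul_zero, smul_zero]
  have h2 : (ε • ρm) * (ε • ρp) = 0 := by
    rw [Matrix.smul_mul, Matrix.mul_smul, hmp, smul_zero, smul_zero]
  have hQsq : (ε • ρp + ε • ρm) ^ 2 = (ρ₁ - ρ₂) ^ 2 := by
    rw [hJH, pow_two, pow_two, add_mul, mul_add, mul_add, sub_mul, mul_sub, mul_sub, h1, h2]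
    abel
  have hQ0sq : (FEIT.cf U aD) ^ 2 = (ρ₁ - ρ₂) ^ 2 := by
    rw [hΔcf, pow_two, pow_two, FEIT.cf_mul U hU2, FEIT.cf_mul U hU2]
    apply congrArg (FEIT.cf U)
    funext i
    by_cases h : i = i0 <;> simp [haD, hgD, h, Pi.mul_apply]
  have hQpsd : (ε • ρp + ε • ρm).PosSemidef := by
    have := FEIT.psd_real_smul (hp.1.add hm.1) (le_of_lt hε0)
    rwa [smul_add] at this
  have hQ0psd : (FEIT.cf U aD).PosSemidef := by
    apply FEIT.cf_posSemidef
    intro i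
    by_cases h : i = i0 <;> simp [haD, h] <;> positivity
  have hQeq : ε • ρp + ε • ρm = FEIT.cf U aD :=
    by open scoped MatrixOrder in exact (CFC.sq_eq_sq_iff _ _ (Matrix.nonneg_iff_posSemidef.2 hQpsd) (Matrix.nonneg_iff_posSemidef.2 hQ0psd)).1 (hQsq.trans hQ0sq.symm)
  have hε2 : (2 * ε) ≠ 0 := mul_ne_zero two_ne_zero hεne
  have h2p : (2 * ε) • ρp = FEIT.cf U (aD + gD) := by
    have h : (ε • ρp + ε • ρm) + (ρ₁ - ρ₂) = (2 * ε) • ρp := by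
      rw [hJH, two_mul, add_smul]
      abel
    rw [← h, hQeq, hΔcf, FEIT.cf_add]
  have h2m : (2 * ε) • ρm = FEIT.cf U (aD - gD) := by
    have h : (ε • ρp + ε • ρm) - (ρ₁ - ρ₂) = (2 * ε) • ρm := by
      rw [hJH, two_mul, add_smul]
      abel
    rw [← h, hQeq, hΔcf, FEIT.cf_sub]
  have hρpcf : ρp = FEIT.cf U pv := by
    have h := congrArg (fun M : Matrix (Fin d) (Fin d) ℂ => (2 * ε)⁻¹ • M) h2p
    simp only [smul_smul, inv_mul_cancel₀ hε2, one_smul] at h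
    rw [h, FEIT.cf_smul]
    apply congrArg (FEIT.cf U)
    funext i
    by_cases hh : i = i0
    · show (2 * ε)⁻¹ * (aD i + gD i) = pv i
      rw [show aD i = ε from if_pos hh, show gD i = -ε from if_pos hh,
        show pv i = 0 from if_pos hh]
      ring
    · show (2 * ε)⁻¹ * (aD i + gD i) = pv i
      rw [show aD i = ε / c from if_neg hh, show gD i = ε / c from if_neg hh,
        show pv i = 1 / c from if_neg hh]
      rw [← add_div, show ε + ε = 2 * ε from by ring, ← mul_div_assoc,
        inv_mul_cancel₀ hε2]
  have hρmcf : ρm = FEIT.cf U e0 := by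
    have h := congrArg (fun M : Matrix (Fin d) (Fin d) ℂ => (2 * ε)⁻¹ • M) h2m
    simp only [smul_smul, inv_mul_cancel₀ hε2, one_smul] at h
    rw [h, FEIT.cf_smul]
    apply congrArg (FEIT.cf U)
    funext i
    by_cases hh : i = i0
    · show (2 * ε)⁻¹ * (aD i - gD i) = e0 i
      rw [show aD i = ε from if_pos hh, show gD i = -ε from if_pos hh,
        show e0 i = 1 from if_pos hh]
      rw [show ε - -ε = 2 * ε from by ring, inv_mul_cancel₀ hε2]
    · show (2 * ε)⁻¹ * (aD i - gD i) = e0 i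
      rw [show aD i = ε / c from if_neg hh, show gD i = ε / c from if_neg hh,
        show e0 i = 0 from if_neg hh]
      ring
  constructor
  · rw [hΔcf]
    unfold traceNorm
    rw [dif_pos (FEIT.cf_isHermitian U gD)]
    rw [FEIT.eig_sum U hU1 gD (FEIT.cf_isHermitian U gD) abs]
    rw [hgD, FEIT.sum_g_ite i0 (-ε) (ε / c) abs]
    rw [abs_neg, abs_of_pos hε0, abs_of_nonneg (le_of_lt (div_pos hε0 hc))]
    field_simp
    linarith [hcdef]
  · rw [hρ₁cf, hρ₂cf, hρpcf, hρmcf]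
    unfold vnEntropy
    rw [dif_pos (FEIT.cf_isHermitian U f1), dif_pos (FEIT.cf_isHermitian U e0),
      dif_pos (FEIT.cf_isHermitian U pv)]
    rw [FEIT.eig_sum U hU1 f1 (FEIT.cf_isHermitian U f1) eta,
      FEIT.eig_sum U hU1 e0 (FEIT.cf_isHermitian U e0) eta,
      FEIT.eig_sum U hU1 pv (FEIT.cf_isHermitian U pv) eta]
    rw [hf1, he0, hpv, FEIT.sum_g_ite i0 (1 - ε) (ε / c) eta, FEIT.sum_g_ite i0 1 0 eta,
      FEIT.sum_g_ite i0 0 (1 / c) eta]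
    unfold eta binEnt
    rw [Real.log_div hεne hcne, one_div, Real.log_inv, Real.log_one]
    field_simp
    ring
end
end

section
/- If ρ₁, ρ₂ are density matrices with (1/2)‖ρ₁ − ρ₂‖₁ = ε ∈ (0,1), Jordan–Hahn decomposition ρ₁ − ρ₂ = ε ρ₊ − ε ρ₋, and additionally ρ₁ ≥ ε ρ₊, then S(ρ₁) − S(ρ₂) ≤ ε S(ρ₊) − ε S(ρ₋) + h(ε). -/
open Matrix BigOperators
open scoped ComplexOrder

noncomputable section

lemma eta_eq (x : ℝ) : eta x = Real.negMulLog x := by simp [eta, Real.negMulLog, neg_mul]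

lemma sum_smul_eta_le {ι : Type*} [Fintype ι] (w x : ι → ℝ) (hw : ∀ i, 0 ≤ w i)
    (hw1 : ∑ i, w i ≤ 1) (hx : ∀ i, 0 ≤ x i) :
    ∑ i, w i * eta (x i) ≤ eta (∑ i, w i * x i) := by
  simp only [eta_eq]
  have key := Real.concaveOn_negMulLog.le_map_sum (t := (Finset.univ : Finset (Option ι)))
      (w := fun o => Option.elim o (1 - ∑ i, w i) w) (p := fun o => Option.elim o 0 x)
      (fun o _ => by cases o with
        | none => simpa using sub_nonneg.2 hw1
        | some i => simpa using hw i)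
      (by rw [Fintype.sum_option]; simp)
      (fun o _ => by cases o with
        | none => simp
        | some i => simpa using hx i)
  rw [Fintype.sum_option, Fintype.sum_option] at key
  simpa [Real.negMulLog_zero] using key

/-- Core majorization lemma: if `C * Cᴴ = diagonal lam`, then the entropy of `lam` is at most
the entropy of the vector of squared column norms of `C`. -/

lemma core_majorization {n m : Type*} [Fintype n] [Fintype m] [DecidableEq n]
    (C : Matrix n m ℂ) (lam : n → ℝ) (hlam : ∀ i, 0 ≤ lam i)
    (hCC : C * Cᴴ = diagonal (fun i => (lam i : ℂ))) :
    ∑ i, eta (lam i) ≤ ∑ k, eta (∑ i, Complex.normSq (C i k)) := by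
  classical
  have hrow : ∀ i, ∑ l, Complex.normSq (C i l) = lam i := by
    intro i
    have h := congrFun (congrFun hCC i) i
    simp only [mul_apply, conjTranspose_apply, diagonal_apply_eq, Complex.star_def] at h
    have h2 : ((∑ l, Complex.normSq (C i l) : ℝ) : ℂ) = (lam i : ℂ) := by
      push_cast
      rw [← h]
      exact Finset.sum_congr rfl fun l _ => (Complex.mul_conj _).symm
    exact_mod_cast h2
  have hzero : ∀ i, lam i = 0 → ∀ k, C i k = 0 := by
    intro i hi k
    have h0 : ∑ l, Complex.normSq (C i l) = 0 := by rw [hrow i, hi]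
    have := (Finset.sum_eq_zero_iff_of_nonneg
      (fun l _ => Complex.normSq_nonneg (C i l))).mp h0 k (Finset.mem_univ k)
    exact Complex.normSq_eq_zero.mp this
  set M : m → n → ℝ := fun k i => if lam i = 0 then 0 else Complex.normSq (C i k) / lam i
    with hM
  have hM0 : ∀ k i, 0 ≤ M k i := by
    intro k i
    by_cases hi : lam i = 0 <;>
      simp [hM, hi, div_nonneg (Complex.normSq_nonneg _) (hlam i)]
  have hq : ∀ k, ∑ i, Complex.normSq (C i k) = ∑ i, M k i * lam i := by
    intro k
    refine Finset.sum_congr rfl fun i _ => ?_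
    by_cases hi : lam i = 0
    · simp [hM, hi, hzero i hi k]
    · simp only [hM, if_neg hi]
      field_simp
  have hcolsum : ∀ i, lam i ≠ 0 → ∑ k, M k i = 1 := by
    intro i hi
    simp only [hM, if_neg hi]
    rw [← Finset.sum_div, hrow i, div_self hi]
  -- row sums are at most 1
  have hrowsum : ∀ k, ∑ i, M k i ≤ 1 := by
    intro k
    set s := ∑ i, M k i with hs
    have hs0 : 0 ≤ s := Finset.sum_nonneg fun i _ => hM0 k i
    set u : n → ℂ := fun i => if lam i = 0 then 0 else C i k / (lam i : ℂ) with hu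
    set w : m → ℂ := Cᴴ *ᵥ u with hw
    have hterm : ∀ i, (starRingEnd ℂ) (C i k) * u i = ((M k i : ℝ) : ℂ) := by
      intro i
      by_cases hi : lam i = 0
      · simp [hu, hM, hi]
      · have hline : (starRingEnd ℂ) (C i k) * (C i k / (lam i : ℂ))
            = ((Complex.normSq (C i k) : ℝ) : ℂ) / (lam i : ℂ) := by
          rw [mul_div_assoc', mul_comm, Complex.mul_conj]
        simp only [hu, hM, if_neg hi, hline]
        push_cast
        ring
    have hwk : w k = (s : ℂ) := by
      have : w k = ∑ i, (starRingEnd ℂ) (C i k) * u i := by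
        simp [hw, mulVec, dotProduct, conjTranspose_apply, Complex.star_def]
      rw [this]
      simp only [hterm]
      push_cast [hs]
      norm_cast
    have hsum_w : ∑ l, Complex.normSq (w l) = s := by
      have h1 : ∑ l, (Complex.normSq (w l) : ℂ) = star w ⬝ᵥ w := by
        rw [dotProduct]
        refine Finset.sum_congr rfl fun l _ => ?_
        rw [Pi.star_apply, Complex.star_def, ← Complex.normSq_eq_conj_mul_self]
      have h2 : star w ⬝ᵥ w = star u ⬝ᵥ (diagonal (fun i => (lam i : ℂ)) *ᵥ u) := by
        rw [hw, star_mulVec, conjTranspose_conjTranspose, ← dotProduct_mulVec,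
          mulVec_mulVec, hCC]
      have h3 : star u ⬝ᵥ (diagonal (fun i => (lam i : ℂ)) *ᵥ u) = ((s : ℝ) : ℂ) := by
        have : ∀ i, (star u) i * (diagonal (fun i => (lam i : ℂ)) *ᵥ u) i
            = ((M k i : ℝ) : ℂ) := by
          intro i
          rw [mulVec_diagonal]
          by_cases hi : lam i = 0
          · simp [hu, hM, hi]
          · have hti : ((lam i : ℂ)) ≠ 0 := by exact_mod_cast hi
            simp only [Pi.star_apply, hu, if_neg hi, hM, Complex.star_def, div_eq_mul_inv]
            rw [_root_.map_mul, map_inv₀, Complex.conj_ofReal]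
            have hrw : (starRingEnd ℂ) (C i k) * ((lam i : ℂ))⁻¹ * ((lam i : ℂ) * (C i k * ((lam i : ℂ))⁻¹))
                = ((starRingEnd ℂ) (C i k) * C i k) * (((lam i : ℂ))⁻¹ * (((lam i : ℂ)) * ((lam i : ℂ))⁻¹)) := by
              ring
            rw [hrw, ← Complex.normSq_eq_conj_mul_self, mul_inv_cancel₀ hti, mul_one]
            push_cast
            ring
        rw [dotProduct]
        simp only [this]
        push_cast [hs]
        norm_cast
      have : ((∑ l, Complex.normSq (w l) : ℝ) : ℂ) = ((s : ℝ) : ℂ) := by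
        push_cast
        rw [h1, h2, h3]
      exact_mod_cast this
    have hsq : s * s ≤ s := by
      have h4 : Complex.normSq (w k) = s * s := by rw [hwk, Complex.normSq_ofReal]
      have h5 : Complex.normSq (w k) ≤ ∑ l, Complex.normSq (w l) :=
        Finset.single_le_sum (fun l _ => Complex.normSq_nonneg (w l)) (Finset.mem_univ k)
      rw [h4, hsum_w] at h5
      exact h5
    nlinarith [hs0]
  -- Jensen per column and sum
  calc ∑ i, eta (lam i) = ∑ i, (∑ k, M k i) * eta (lam i) := by
        refine Finset.sum_congr rfl fun i _ => ?_
        by_cases hi : lam i = 0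
        · rw [hi, eta_zero, mul_zero]
        · rw [hcolsum i hi, one_mul]
    _ = ∑ i, ∑ k, M k i * eta (lam i) := by
        simp only [Finset.sum_mul]
    _ = ∑ k, ∑ i, M k i * eta (lam i) := Finset.sum_comm
    _ ≤ ∑ k, eta (∑ i, M k i * lam i) :=
        Finset.sum_le_sum fun k _ => sum_smul_eta_le _ _ (hM0 k) (hrowsum k) hlam
    _ = ∑ k, eta (∑ i, Complex.normSq (C i k)) := by
        refine Finset.sum_congr rfl fun k _ => ?_
        rw [hq k]

lemma vnEntropy_eq_s9 {n : Type*} [Fintype n] [DecidableEq n] {A : Matrix n n ℂ}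
    (hA : A.IsHermitian) : vnEntropy A = ∑ i, eta (hA.eigenvalues i) := dif_pos hA

lemma unitary_col_normSq {n m : Type*} [Fintype n] [Fintype m] [DecidableEq m]
    {U : Matrix n m ℂ} (hU : Uᴴ * U = 1) (i : m) :
    ∑ j, Complex.normSq (U j i) = 1 := by
  have h := congrFun (congrFun hU i) i
  simp only [mul_apply, one_apply_eq, conjTranspose_apply, Complex.star_def] at h
  have h2 : ((∑ j, Complex.normSq (U j i) : ℝ) : ℂ) = 1 := by
    push_cast
    rw [← h]
    exact Finset.sum_congr rfl fun j _ => Complex.normSq_eq_conj_mul_self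
  exact_mod_cast h2

lemma unitary_row_normSq {n m : Type*} [Fintype n] [Fintype m] [DecidableEq n]
    {U : Matrix n m ℂ} (hU : U * Uᴴ = 1) (j : n) :
    ∑ i, Complex.normSq (U j i) = 1 := by
  have h := congrFun (congrFun hU j) j
  simp only [mul_apply, one_apply_eq, conjTranspose_apply, Complex.star_def] at h
  have h2 : ((∑ i, Complex.normSq (U j i) : ℝ) : ℂ) = 1 := by
    push_cast
    rw [← h]
    exact Finset.sum_congr rfl fun i _ => by rw [Complex.mul_conj]
  exact_mod_cast h2

lemma conj_diag_entry {n : Type*} [Fintype n] [DecidableEq n] (W : Matrix n n ℂ)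
    (mu : n → ℝ) (i : n) :
    (star W * diagonal (fun j => (mu j : ℂ)) * W) i i
      = ((∑ j, Complex.normSq (W j i) * mu j : ℝ) : ℂ) := by
  rw [Matrix.mul_assoc, mul_apply]
  push_cast
  refine Finset.sum_congr rfl fun j _ => ?_
  rw [diagonal_mul, star_apply, Complex.star_def]
  have : (starRingEnd ℂ) (W j i) * ((mu j : ℂ) * W j i)
      = ((starRingEnd ℂ) (W j i) * W j i) * (mu j : ℂ) := by ring
  rw [this, ← Complex.normSq_eq_conj_mul_self]

lemma sum_eigenvalues_cast {n : Type*} [Fintype n] [DecidableEq n] {A : Matrix n n ℂ}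
    (hA : A.IsHermitian) : ((∑ i, hA.eigenvalues i : ℝ) : ℂ) = A.trace := by
  conv_rhs => rw [hA.spectral_theorem, Unitary.conjStarAlgAut_apply]
  rw [Matrix.trace_mul_cycle, mem_unitaryGroup_iff'.mp (hA.eigenvectorUnitary).2,
    Matrix.one_mul, trace_diagonal]
  push_cast
  rfl

lemma posSemidef_real_smul {n : Type*} [Fintype n] {M : Matrix n n ℂ} (hM : M.PosSemidef)
    {r : ℝ} (hr : 0 ≤ r) : (((r : ℂ)) • M).PosSemidef := by
  constructor
  · show (((r : ℂ)) • M)ᴴ = _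
    rw [conjTranspose_smul, Complex.star_def, Complex.conj_ofReal, hM.1.eq]
  · intro x
    have hH : (((r : ℂ)) • M).IsHermitian := by
      show (((r : ℂ)) • M)ᴴ = _
      rw [conjTranspose_smul, Complex.star_def, Complex.conj_ofReal, hM.1.eq]
    refine (PosSemidef.of_dotProduct_mulVec_nonneg hH fun x => ?_).2 x
    rw [smul_mulVec, dotProduct_smul, smul_eq_mul]
    exact mul_nonneg (by exact_mod_cast hr) (hM.dotProduct_mulVec_nonneg x)

lemma real_smul_matrix {n m : Type*} (r : ℝ) (M : Matrix n m ℂ) :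
    r • M = (r : ℂ) • M := by
  ext i j
  simp [Complex.real_smul]

lemma spec_entry {n : Type*} [Fintype n] [DecidableEq n] {A : Matrix n n ℂ}
    (hA : A.IsHermitian) (x y : n) :
    A x y = ∑ a, (hA.eigenvalues a : ℂ)
      * ((hA.eigenvectorUnitary : Matrix n n ℂ) x a
          * (starRingEnd ℂ) ((hA.eigenvectorUnitary : Matrix n n ℂ) y a)) := by
  conv_lhs => rw [hA.spectral_theorem, Unitary.conjStarAlgAut_apply]
  rw [mul_apply]
  refine Finset.sum_congr rfl fun a _ => ?_
  rw [mul_diagonal, star_apply, Complex.star_def]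
  simp only [Function.comp_apply, RCLike.ofReal_alg, Complex.real_smul, mul_one]
  ring

lemma eta_concave_pair {a b w₁ w₂ : ℝ} (ha : 0 ≤ a) (hb : 0 ≤ b) (hw₁ : 0 ≤ w₁)
    (hw₂ : 0 ≤ w₂) (hw : w₁ + w₂ ≤ 1) :
    w₁ * eta a + w₂ * eta b ≤ eta (w₁ * a + w₂ * b) := by
  have key := sum_smul_eta_le (ι := Bool) (fun t => if t then w₁ else w₂)
      (fun t => if t then a else b) (by intro i; cases i <;> simpa)
      (by rw [Fintype.sum_bool]; simpa) (by intro i; cases i <;> simpa)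
  rw [Fintype.sum_bool, Fintype.sum_bool] at key
  simpa using key

/-- Concavity of von Neumann entropy for a two-component mixture. -/

lemma vnEntropy_concave_mix {n : Type*} [Fintype n] [DecidableEq n]
    {A B : Matrix n n ℂ} (hA : IsDensity A) (hB : IsDensity B)
    {ε : ℝ} (hε0 : 0 ≤ ε) (hε1 : ε ≤ 1) :
    ε * vnEntropy A + (1 - ε) * vnEntropy B ≤ vnEntropy (ε • A + (1 - ε) • B) := by
  classical
  obtain ⟨hAp, hAtr⟩ := hA
  obtain ⟨hBp, hBtr⟩ := hB
  have hAh := hAp.1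
  have hBh := hBp.1
  have hρp : (ε • A + (1 - ε) • B).PosSemidef := by
    rw [real_smul_matrix, real_smul_matrix]
    exact (posSemidef_real_smul hAp hε0).add (posSemidef_real_smul hBp (by linarith))
  have hρh := hρp.1
  set lam : n → ℝ := hρh.eigenvalues with hlamdef
  set V : Matrix n n ℂ := (hρh.eigenvectorUnitary : Matrix n n ℂ) with hVdef
  set UA : Matrix n n ℂ := (hAh.eigenvectorUnitary : Matrix n n ℂ) with hUAdef
  set UB : Matrix n n ℂ := (hBh.eigenvectorUnitary : Matrix n n ℂ) with hUBdef
  have hV1 : star V * V = 1 := mem_unitaryGroup_iff'.mp hρh.eigenvectorUnitary.2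
  have hV2 : V * star V = 1 := mem_unitaryGroup_iff.mp hρh.eigenvectorUnitary.2
  have hUA1 : star UA * UA = 1 := mem_unitaryGroup_iff'.mp hAh.eigenvectorUnitary.2
  have hUA2 : UA * star UA = 1 := mem_unitaryGroup_iff.mp hAh.eigenvectorUnitary.2
  have hUB1 : star UB * UB = 1 := mem_unitaryGroup_iff'.mp hBh.eigenvectorUnitary.2
  have hUB2 : UB * star UB = 1 := mem_unitaryGroup_iff.mp hBh.eigenvectorUnitary.2
  set WA : Matrix n n ℂ := star UA * V with hWAdef
  set WB : Matrix n n ℂ := star UB * V with hWBdef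
  have hWA1 : star WA * WA = 1 := by
    rw [hWAdef, StarMul.star_mul, star_star]
    calc star V * UA * (star UA * V) = star V * (UA * star UA) * V := by
          simp only [Matrix.mul_assoc]
      _ = 1 := by rw [hUA2, Matrix.mul_one, hV1]
  have hWA2 : WA * star WA = 1 := by
    rw [hWAdef, StarMul.star_mul, star_star]
    calc star UA * V * (star V * UA) = star UA * (V * star V) * UA := by
          simp only [Matrix.mul_assoc]
      _ = 1 := by rw [hV2, Matrix.mul_one, hUA1]
  have hWB1 : star WB * WB = 1 := by
    rw [hWBdef, StarMul.star_mul, star_star]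
    calc star V * UB * (star UB * V) = star V * (UB * star UB) * V := by
          simp only [Matrix.mul_assoc]
      _ = 1 := by rw [hUB2, Matrix.mul_one, hV1]
  have hWB2 : WB * star WB = 1 := by
    rw [hWBdef, StarMul.star_mul, star_star]
    calc star UB * V * (star V * UB) = star UB * (V * star V) * UB := by
          simp only [Matrix.mul_assoc]
      _ = 1 := by rw [hV2, Matrix.mul_one, hUB1]
  -- quadratic forms in the eigenbasis of the mixture
  set a : n → ℝ := fun i => ∑ j, Complex.normSq (WA j i) * hAh.eigenvalues j with hadef
  set b : n → ℝ := fun i => ∑ j, Complex.normSq (WB j i) * hBh.eigenvalues j with hbdef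
  have hAconj : star V * A * V = star WA * diagonal (fun j => (hAh.eigenvalues j : ℂ)) * WA := by
    conv_lhs => rw [hAh.spectral_theorem, Unitary.conjStarAlgAut_apply]
    rw [hWAdef, StarMul.star_mul, star_star]
    simp only [Matrix.mul_assoc]
    rfl
  have hBconj : star V * B * V = star WB * diagonal (fun j => (hBh.eigenvalues j : ℂ)) * WB := by
    conv_lhs => rw [hBh.spectral_theorem, Unitary.conjStarAlgAut_apply]
    rw [hWBdef, StarMul.star_mul, star_star]
    simp only [Matrix.mul_assoc]
    rfl
  have hdiag : star V * (ε • A + (1 - ε) • B) * V = diagonal (RCLike.ofReal ∘ lam) :=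
    by have := hρh.conjStarAlgAut_star_eigenvectorUnitary
       simpa only [Unitary.conjStarAlgAut_star_apply, Unitary.coe_star] using this
  have hsplit : star V * (ε • A + (1 - ε) • B) * V
      = (ε : ℂ) • (star V * A * V) + ((1 - ε : ℝ) : ℂ) • (star V * B * V) := by
    rw [real_smul_matrix, real_smul_matrix]
    simp only [Matrix.mul_add, Matrix.add_mul, Matrix.mul_smul, Matrix.smul_mul]
  have hlam_eq : ∀ i, lam i = ε * a i + (1 - ε) * b i := by
    intro i
    have h1 := congrFun (congrFun (hsplit.symm.trans hdiag) i) i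
    simp only [Matrix.add_apply, Matrix.smul_apply, smul_eq_mul, hAconj, hBconj,
      conj_diag_entry, diagonal_apply_eq, Function.comp_apply, RCLike.ofReal_alg,
      Complex.real_smul, mul_one] at h1
    rw [show (∑ j, Complex.normSq (WA j i) * hAh.eigenvalues j) = a i from rfl,
        show (∑ j, Complex.normSq (WB j i) * hBh.eigenvalues j) = b i from rfl] at h1
    have h2 : ((ε * a i + (1 - ε) * b i : ℝ) : ℂ) = ((lam i : ℝ) : ℂ) := by
      push_cast
      push_cast at h1
      linear_combination h1
    exact_mod_cast h2.symm
  have ha0 : ∀ i, 0 ≤ a i := fun i => Finset.sum_nonneg fun j _ =>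
    mul_nonneg (Complex.normSq_nonneg _) (hAp.eigenvalues_nonneg j)
  have hb0 : ∀ i, 0 ≤ b i := fun i => Finset.sum_nonneg fun j _ =>
    mul_nonneg (Complex.normSq_nonneg _) (hBp.eigenvalues_nonneg j)
  -- step 1: pointwise concavity
  have step1 : ∑ i, (ε * eta (a i) + (1 - ε) * eta (b i)) ≤ ∑ i, eta (lam i) := by
    refine Finset.sum_le_sum fun i _ => ?_
    rw [hlam_eq i]
    exact eta_concave_pair (ha0 i) (hb0 i) hε0 (by linarith) (by linarith)
  -- step 2: Jensen against the doubly stochastic matrix from WA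
  have step2 : ∑ j, eta (hAh.eigenvalues j) ≤ ∑ i, eta (a i) := by
    calc ∑ j, eta (hAh.eigenvalues j)
        = ∑ j, (∑ i, Complex.normSq (WA j i)) * eta (hAh.eigenvalues j) := by
          refine Finset.sum_congr rfl fun j _ => ?_
          rw [unitary_row_normSq (by rw [← Matrix.star_eq_conjTranspose]; exact hWA2) j, one_mul]
      _ = ∑ i, ∑ j, Complex.normSq (WA j i) * eta (hAh.eigenvalues j) := by
          simp only [Finset.sum_mul]
          exact Finset.sum_comm
      _ ≤ ∑ i, eta (a i) := by
          refine Finset.sum_le_sum fun i _ => ?_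
          exact sum_smul_eta_le _ _ (fun j => Complex.normSq_nonneg _)
            (le_of_eq (unitary_col_normSq
              (by rw [← Matrix.star_eq_conjTranspose]; exact hWA1) i))
            (fun j => hAp.eigenvalues_nonneg j)
  have step3 : ∑ j, eta (hBh.eigenvalues j) ≤ ∑ i, eta (b i) := by
    calc ∑ j, eta (hBh.eigenvalues j)
        = ∑ j, (∑ i, Complex.normSq (WB j i)) * eta (hBh.eigenvalues j) := by
          refine Finset.sum_congr rfl fun j _ => ?_
          rw [unitary_row_normSq (by rw [← Matrix.star_eq_conjTranspose]; exact hWB2) j, one_mul]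
      _ = ∑ i, ∑ j, Complex.normSq (WB j i) * eta (hBh.eigenvalues j) := by
          simp only [Finset.sum_mul]
          exact Finset.sum_comm
      _ ≤ ∑ i, eta (b i) := by
          refine Finset.sum_le_sum fun i _ => ?_
          exact sum_smul_eta_le _ _ (fun j => Complex.normSq_nonneg _)
            (le_of_eq (unitary_col_normSq
              (by rw [← Matrix.star_eq_conjTranspose]; exact hWB1) i))
            (fun j => hBp.eigenvalues_nonneg j)
  rw [vnEntropy_eq_s9 hρh, vnEntropy_eq_s9 hAh, vnEntropy_eq_s9 hBh]
  calc ε * ∑ j, eta (hAh.eigenvalues j) + (1 - ε) * ∑ j, eta (hBh.eigenvalues j)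
      ≤ ε * ∑ i, eta (a i) + (1 - ε) * ∑ i, eta (b i) := by
        have := mul_le_mul_of_nonneg_left step2 hε0
        have := mul_le_mul_of_nonneg_left step3 (by linarith : (0:ℝ) ≤ 1 - ε)
        linarith
    _ = ∑ i, (ε * eta (a i) + (1 - ε) * eta (b i)) := by
        rw [Finset.sum_add_distrib, Finset.mul_sum, Finset.mul_sum]
    _ ≤ ∑ i, eta (lam i) := step1

lemma eta_mul (c x : ℝ) : eta (c * x) = x * eta c + c * eta x := by
  simp only [eta_eq]; exact Real.negMulLog_mul c x

lemma rclike_ofreal : (RCLike.ofReal : ℝ → ℂ) = Complex.ofReal := rfl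

/-- Mixing entropy upper bound. -/

lemma vnEntropy_mix_le {n : Type*} [Fintype n] [DecidableEq n]
    {A B : Matrix n n ℂ} (hA : IsDensity A) (hB : IsDensity B)
    {ε : ℝ} (hε0 : 0 ≤ ε) (hε1 : ε ≤ 1) :
    vnEntropy (ε • A + (1 - ε) • B) ≤ ε * vnEntropy A + (1 - ε) * vnEntropy B + binEnt ε := by
  classical
  obtain ⟨hAp, hAtr⟩ := hA
  obtain ⟨hBp, hBtr⟩ := hB
  have hAh := hAp.1
  have hBh := hBp.1
  have hε1' : (0:ℝ) ≤ 1 - ε := by linarith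
  have hρp : (ε • A + (1 - ε) • B).PosSemidef := by
    rw [real_smul_matrix, real_smul_matrix]
    exact (posSemidef_real_smul hAp hε0).add (posSemidef_real_smul hBp hε1')
  have hρh := hρp.1
  set lam : n → ℝ := hρh.eigenvalues with hlamdef
  set V : Matrix n n ℂ := (hρh.eigenvectorUnitary : Matrix n n ℂ) with hVdef
  set UA : Matrix n n ℂ := (hAh.eigenvectorUnitary : Matrix n n ℂ) with hUAdef
  set UB : Matrix n n ℂ := (hBh.eigenvectorUnitary : Matrix n n ℂ) with hUBdef
  have hV2 : V * star V = 1 := mem_unitaryGroup_iff.mp hρh.eigenvectorUnitary.2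
  have hUA1 : star UA * UA = 1 := mem_unitaryGroup_iff'.mp hAh.eigenvectorUnitary.2
  have hUB1 : star UB * UB = 1 := mem_unitaryGroup_iff'.mp hBh.eigenvectorUnitary.2
  have hsumA : ∑ j, hAh.eigenvalues j = 1 := by
    have h := sum_eigenvalues_cast hAh
    rw [hAtr] at h
    exact_mod_cast h
  have hsumB : ∑ j, hBh.eigenvalues j = 1 := by
    have h := sum_eigenvalues_cast hBh
    rw [hBtr] at h
    exact_mod_cast h
  set Φ : Matrix n (n ⊕ n) ℂ := Matrix.of fun x k =>
    Sum.elim (fun j => ((Real.sqrt (ε * hAh.eigenvalues j) : ℝ) : ℂ) * UA x j)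
             (fun j => ((Real.sqrt ((1 - ε) * hBh.eigenvalues j) : ℝ) : ℂ) * UB x j) k
    with hPhidef
  have hPhiPhi : Φ * Φᴴ = ε • A + (1 - ε) • B := by
    ext x y
    rw [mul_apply, Fintype.sum_sum_type]
    have hA' : ∑ j, Φ x (Sum.inl j) * Φᴴ (Sum.inl j) y = (ε : ℂ) * A x y := by
      rw [spec_entry hAh x y, Finset.mul_sum]
      refine Finset.sum_congr rfl fun j _ => ?_
      rw [conjTranspose_apply]
      simp only [hPhidef, of_apply, Sum.elim_inl, Complex.star_def, _root_.map_mul,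
        Complex.conj_ofReal]
      have hnn : 0 ≤ ε * hAh.eigenvalues j := mul_nonneg hε0 (hAp.eigenvalues_nonneg j)
      have hsq : ((Real.sqrt (ε * hAh.eigenvalues j) : ℝ) : ℂ)
          * ((Real.sqrt (ε * hAh.eigenvalues j) : ℝ) : ℂ)
          = (ε : ℂ) * ((hAh.eigenvalues j : ℝ) : ℂ) := by
        rw [← Complex.ofReal_mul, Real.mul_self_sqrt hnn, Complex.ofReal_mul]
      calc ((Real.sqrt (ε * hAh.eigenvalues j) : ℝ) : ℂ) * UA x j
            * (((Real.sqrt (ε * hAh.eigenvalues j) : ℝ) : ℂ) * (starRingEnd ℂ) (UA y j))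
          = (((Real.sqrt (ε * hAh.eigenvalues j) : ℝ) : ℂ)
              * ((Real.sqrt (ε * hAh.eigenvalues j) : ℝ) : ℂ))
              * (UA x j * (starRingEnd ℂ) (UA y j)) := by ring
        _ = (ε : ℂ) * ((hAh.eigenvalues j : ℂ) * (UA x j * (starRingEnd ℂ) (UA y j))) := by
              rw [hsq]; ring
    have hB' : ∑ j, Φ x (Sum.inr j) * Φᴴ (Sum.inr j) y = ((1 - ε : ℝ) : ℂ) * B x y := by
      rw [spec_entry hBh x y, Finset.mul_sum]
      refine Finset.sum_congr rfl fun j _ => ?_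
      rw [conjTranspose_apply]
      simp only [hPhidef, of_apply, Sum.elim_inr, Complex.star_def, _root_.map_mul,
        Complex.conj_ofReal]
      have hnn : 0 ≤ (1 - ε) * hBh.eigenvalues j := mul_nonneg hε1' (hBp.eigenvalues_nonneg j)
      have hsq : ((Real.sqrt ((1 - ε) * hBh.eigenvalues j) : ℝ) : ℂ)
          * ((Real.sqrt ((1 - ε) * hBh.eigenvalues j) : ℝ) : ℂ)
          = ((1 - ε : ℝ) : ℂ) * ((hBh.eigenvalues j : ℝ) : ℂ) := by
        rw [← Complex.ofReal_mul, Real.mul_self_sqrt hnn, Complex.ofReal_mul]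
      calc ((Real.sqrt ((1 - ε) * hBh.eigenvalues j) : ℝ) : ℂ) * UB x j
            * (((Real.sqrt ((1 - ε) * hBh.eigenvalues j) : ℝ) : ℂ) * (starRingEnd ℂ) (UB y j))
          = (((Real.sqrt ((1 - ε) * hBh.eigenvalues j) : ℝ) : ℂ)
              * ((Real.sqrt ((1 - ε) * hBh.eigenvalues j) : ℝ) : ℂ))
              * (UB x j * (starRingEnd ℂ) (UB y j)) := by ring
        _ = ((1 - ε : ℝ) : ℂ) * ((hBh.eigenvalues j : ℂ) * (UB x j * (starRingEnd ℂ) (UB y j))) := by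
              rw [hsq]; ring
    rw [hA', hB']
    rw [real_smul_matrix, real_smul_matrix]
    simp [smul_eq_mul]
  -- the rescaled amplitude matrix in the eigenbasis of the mixture
  have hCd : (star V * Φ) * (star V * Φ)ᴴ = diagonal (fun i => (lam i : ℂ)) := by
    rw [conjTranspose_mul]
    have hVH : (star V)ᴴ = V := by
      rw [Matrix.star_eq_conjTranspose, conjTranspose_conjTranspose]
    calc star V * Φ * (Φᴴ * (star V)ᴴ) = star V * (Φ * Φᴴ) * V := by
          rw [hVH]; simp only [Matrix.mul_assoc]
      _ = diagonal (fun i => (lam i : ℂ)) := by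
          rw [hPhiPhi]
          have h : star V * (ε • A + (1 - ε) • B) * V = diagonal (RCLike.ofReal ∘ lam) := by
            have := hρh.conjStarAlgAut_star_eigenvectorUnitary
            simpa only [Unitary.conjStarAlgAut_star_apply, Unitary.coe_star] using this
          rw [h]
          congr 1
  have hlam0 : ∀ i, 0 ≤ lam i := fun i => hρp.eigenvalues_nonneg i
  have core := core_majorization (star V * Φ) lam hlam0 hCd
  -- column norms of `star V * Φ` equal those of `Φ`
  have hcolnorm : ∀ k, ∑ i, Complex.normSq ((star V * Φ) i k) = ∑ x, Complex.normSq (Φ x k) := by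
    intro k
    have h2 : (star V * Φ)ᴴ * (star V * Φ) = Φᴴ * Φ := by
      rw [conjTranspose_mul]
      have hVH : (star V)ᴴ = V := by
        rw [Matrix.star_eq_conjTranspose, conjTranspose_conjTranspose]
      calc Φᴴ * (star V)ᴴ * (star V * Φ) = Φᴴ * ((star V)ᴴ * star V) * Φ := by
            simp only [Matrix.mul_assoc]
        _ = Φᴴ * Φ := by rw [hVH, hV2, Matrix.mul_one]
    have h1 : ((∑ i, Complex.normSq ((star V * Φ) i k) : ℝ) : ℂ)
        = ((star V * Φ)ᴴ * (star V * Φ)) k k := by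
      rw [mul_apply]
      push_cast
      refine Finset.sum_congr rfl fun i _ => ?_
      rw [conjTranspose_apply, Complex.star_def, Complex.normSq_eq_conj_mul_self]
    have h3 : ((∑ x, Complex.normSq (Φ x k) : ℝ) : ℂ) = (Φᴴ * Φ) k k := by
      rw [mul_apply]
      push_cast
      refine Finset.sum_congr rfl fun x _ => ?_
      rw [conjTranspose_apply, Complex.star_def, Complex.normSq_eq_conj_mul_self]
    have := h1.trans (by rw [h2, ← h3])
    exact_mod_cast this
  have hqinl : ∀ j, ∑ x, Complex.normSq (Φ x (Sum.inl j)) = ε * hAh.eigenvalues j := by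
    intro j
    have hnn : 0 ≤ ε * hAh.eigenvalues j := mul_nonneg hε0 (hAp.eigenvalues_nonneg j)
    have hterm : ∀ x, Complex.normSq (Φ x (Sum.inl j))
        = (ε * hAh.eigenvalues j) * Complex.normSq (UA x j) := by
      intro x
      simp only [hPhidef, of_apply, Sum.elim_inl, Complex.normSq_mul, Complex.normSq_ofReal]
      rw [Real.mul_self_sqrt hnn]
    rw [Finset.sum_congr rfl fun x _ => hterm x, ← Finset.mul_sum,
      unitary_col_normSq (by rw [← Matrix.star_eq_conjTranspose]; exact hUA1) j, mul_one]
  have hqinr : ∀ j, ∑ x, Complex.normSq (Φ x (Sum.inr j)) = (1 - ε) * hBh.eigenvalues j := by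
    intro j
    have hnn : 0 ≤ (1 - ε) * hBh.eigenvalues j := mul_nonneg hε1' (hBp.eigenvalues_nonneg j)
    have hterm : ∀ x, Complex.normSq (Φ x (Sum.inr j))
        = ((1 - ε) * hBh.eigenvalues j) * Complex.normSq (UB x j) := by
      intro x
      simp only [hPhidef, of_apply, Sum.elim_inr, Complex.normSq_mul, Complex.normSq_ofReal]
      rw [Real.mul_self_sqrt hnn]
    rw [Finset.sum_congr rfl fun x _ => hterm x, ← Finset.mul_sum,
      unitary_col_normSq (by rw [← Matrix.star_eq_conjTranspose]; exact hUB1) j, mul_one]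
  rw [vnEntropy_eq_s9 hρh, vnEntropy_eq_s9 hAh, vnEntropy_eq_s9 hBh]
  calc ∑ i, eta (hρh.eigenvalues i)
      ≤ ∑ k, eta (∑ i, Complex.normSq ((star V * Φ) i k)) := core
    _ = ∑ j, eta (ε * hAh.eigenvalues j) + ∑ j, eta ((1 - ε) * hBh.eigenvalues j) := by
        rw [Fintype.sum_sum_type]
        congr 1
        · exact Finset.sum_congr rfl fun j _ => by rw [hcolnorm, hqinl j]
        · exact Finset.sum_congr rfl fun j _ => by rw [hcolnorm, hqinr j]
    _ = (∑ j, (hAh.eigenvalues j * eta ε + ε * eta (hAh.eigenvalues j)))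
        + ∑ j, (hBh.eigenvalues j * eta (1 - ε) + (1 - ε) * eta (hBh.eigenvalues j)) := by
        congr 1
        · exact Finset.sum_congr rfl fun j _ => eta_mul _ _
        · exact Finset.sum_congr rfl fun j _ => eta_mul _ _
    _ = ε * ∑ j, eta (hAh.eigenvalues j) + (1 - ε) * ∑ j, eta (hBh.eigenvalues j) + binEnt ε := by
        rw [Finset.sum_add_distrib, Finset.sum_add_distrib, ← Finset.sum_mul, ← Finset.sum_mul,
          ← Finset.mul_sum, ← Finset.mul_sum, hsumA, hsumB, binEnt_eq]
        ring

/-- the fundamental entropic inequality in the special case `ρ₁ ≥ ε ρ₊`. -/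
theorem entropic_inequality_of_loewner {d : ℕ} (ρ₁ ρ₂ ρp ρm : Matrix (Fin d) (Fin d) ℂ)
    (h1 : IsDensity ρ₁) (h2 : IsDensity ρ₂) (hp : IsDensity ρp) (hm : IsDensity ρm)
    (ε : ℝ) (hε : ε ∈ Set.Ioo (0 : ℝ) 1)
    (htr : traceNorm (ρ₁ - ρ₂) / 2 = ε)
    (hJH : ρ₁ - ρ₂ = ε • ρp - ε • ρm)
    (horth : ρp * ρm = 0)
    (hloewner : (ρ₁ - ε • ρp).PosSemidef) :
    vnEntropy ρ₁ - vnEntropy ρ₂ ≤ ε * vnEntropy ρp - ε * vnEntropy ρm + binEnt ε := by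
  obtain ⟨hε0, hε1⟩ := hε
  have hne : (1 - ε) ≠ 0 := by linarith
  set ω : Matrix (Fin d) (Fin d) ℂ := (1 - ε)⁻¹ • (ρ₁ - ε • ρp) with hω
  have hωpsd : ω.PosSemidef := by
    rw [hω, real_smul_matrix]
    exact posSemidef_real_smul hloewner (inv_nonneg.2 (by linarith))
  have hωtr : ω.trace = 1 := by
    rw [hω, real_smul_matrix, trace_smul]
    have hsub : (ρ₁ - ε • ρp).trace = ((1 - ε : ℝ) : ℂ) := by
      rw [trace_sub, real_smul_matrix, trace_smul, h1.2, hp.2, smul_eq_mul, mul_one]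
      push_cast
      ring
    rw [hsub, smul_eq_mul, ← Complex.ofReal_mul, inv_mul_cancel₀ hne]
    norm_cast
  have hωd : IsDensity ω := ⟨hωpsd, hωtr⟩
  have e1 : ρ₁ = ε • ρp + (1 - ε) • ω := by
    rw [hω, smul_smul, mul_inv_cancel₀ hne, one_smul]
    abel
  have e2 : ρ₂ = ε • ρm + (1 - ε) • ω := by
    have h21 : ρ₂ = ρ₁ - (ε • ρp - ε • ρm) := by rw [← hJH, sub_sub_cancel]
    rw [h21, hω, smul_smul, mul_inv_cancel₀ hne, one_smul]
    abel
  have hUB := vnEntropy_mix_le hp hωd (le_of_lt hε0) (le_of_lt hε1)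
  have hLB := vnEntropy_concave_mix hm hωd (le_of_lt hε0) (le_of_lt hε1)
  rw [e1, e2]
  linarith
end
end
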